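/- arXiv:2103.06825 — 2 statements merged into one kernel-verified Lean document; each statement's English description precedes it below -/
import Mathlib

section
/- There exists an uncountable family of minimal equicontinuous Cantor actions of the integer Heisenberg group H, each of which is topologically free and wild, such that no two distinct members of the family are return equivalent. -/
noncomputable section

open Set Topology

/-! ### The group of homeomorphisms -/

namespace Homeomorph

variable {X : Type*} [TopologicalSpace X]

instance instGroup' : Group (X ≃ₜ X) where
  mul f g := g.trans f
  one := Homeomorph.refl X
  inv := Homeomorph.symm
  mul_assoc f g h := rfl
  one_mul f := rfl
  mul_one f := rfl
  inv_mul_cancel f := Homeomorph.ext fun x => f.symm_apply_apply x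

@[simp] theorem mul_apply' (f g : X ≃ₜ X) (x : X) : (f * g) x = f (g x) := rfl
@[simp] theorem one_apply' (x : X) : (1 : X ≃ₜ X) x = x := rfl
@[simp] theorem inv_eq_symm (f : X ≃ₜ X) : f⁻¹ = f.symm := rfl

/-- The uniform topology (topology of uniform convergence, equivalently for a compact
metric space the compact-open topology) on the group of homeomorphisms of a compact
metric space, as the metric topology of the sup-metric. -/
instance instMetricSpaceHomeomorph {Y : Type*} [MetricSpace Y] [CompactSpace Y] :
    MetricSpace (Y ≃ₜ Y) :=
  MetricSpace.induced (fun h => (⟨h, h.continuous⟩ : C(Y, Y)))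
    (fun f g hfg => Homeomorph.ext fun x => congrFun (congrArg ContinuousMap.toFun hfg) x)
    inferInstance

end Homeomorph

namespace Homeomorph

variable {Y : Type*} [MetricSpace Y] [CompactSpace Y]

theorem dist_eq_contMap (f g : Y ≃ₜ Y) :
    dist f g = dist (⟨f, f.continuous⟩ : C(Y, Y)) (⟨g, g.continuous⟩ : C(Y, Y)) := rfl

theorem dist_apply_le (f g : Y ≃ₜ Y) (x : Y) : dist (f x) (g x) ≤ dist f g :=
  ContinuousMap.dist_apply_le_dist (f := (⟨f, f.continuous⟩ : C(Y, Y)))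
    (g := (⟨g, g.continuous⟩ : C(Y, Y))) x

theorem dist_lt_iff' (f g : Y ≃ₜ Y) {C : ℝ} (hC : 0 < C) :
    dist f g < C ↔ ∀ x : Y, dist (f x) (g x) < C := by
  rw [dist_eq_contMap, ContinuousMap.dist_lt_iff hC]
  rfl

instance : IsTopologicalGroup (Y ≃ₜ Y) where
  continuous_mul := by
    rw [Metric.continuous_iff]
    rintro ⟨f₀, g₀⟩ ε hε
    obtain ⟨δ₁, hδ₁, H₁⟩ := Metric.uniformContinuous_iff.mp
      (CompactSpace.uniformContinuous_of_continuous f₀.continuous) (ε / 2) (by positivity)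
    refine ⟨min δ₁ (ε / 2), by positivity, ?_⟩
    rintro ⟨f, g⟩ hd
    have hdf : dist f f₀ < ε / 2 := by
      have h' : dist f f₀ ≤ dist ((f, g)) ((f₀, g₀)) := by
        rw [Prod.dist_eq]; exact le_max_left _ _
      exact (h'.trans_lt hd).trans_le (min_le_right _ _)
    have hdg : dist g g₀ < δ₁ := by
      have h' : dist g g₀ ≤ dist ((f, g)) ((f₀, g₀)) := by
        rw [Prod.dist_eq]; exact le_max_right _ _
      exact (h'.trans_lt hd).trans_le (min_le_left _ _)
    rw [dist_lt_iff' _ _ hε]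
    intro x
    have h1 : dist (f (g x)) (f₀ (g x)) < ε / 2 :=
      lt_of_le_of_lt (dist_apply_le f f₀ (g x)) hdf
    have h2 : dist (f₀ (g x)) (f₀ (g₀ x)) < ε / 2 :=
      H₁ (lt_of_le_of_lt (dist_apply_le g g₀ x) hdg)
    calc dist ((f * g) x) ((f₀ * g₀) x) ≤ dist (f (g x)) (f₀ (g x)) + dist (f₀ (g x)) (f₀ (g₀ x)) :=
          dist_triangle _ _ _
      _ < ε / 2 + ε / 2 := by exact add_lt_add h1 h2
      _ = ε := by ring
  continuous_inv := by
    rw [Metric.continuous_iff]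
    intro f₀ ε hε
    obtain ⟨δ, hδ, H⟩ := Metric.uniformContinuous_iff.mp
      (CompactSpace.uniformContinuous_of_continuous f₀.symm.continuous) ε hε
    refine ⟨δ, hδ, ?_⟩
    intro g hdg
    rw [dist_lt_iff' _ _ hε]
    intro y
    have key : dist (g (g.symm y)) (f₀ (g.symm y)) < δ :=
      lt_of_le_of_lt (dist_apply_le g f₀ (g.symm y)) hdg
    have h2 := H key
    have h3 : dist (f₀.symm (g (g.symm y))) (f₀.symm (f₀ (g.symm y))) < ε := h2
    rw [Homeomorph.apply_symm_apply, Homeomorph.symm_apply_apply] at h3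
    rw [dist_comm] at h3
    simpa using h3
end Homeomorph

/-! ### Steinitz (supernatural) numbers -/

/-- A Steinitz number: a formal product of primes with exponents in `ℕ∞`. -/
def SteinitzNum : Type := Nat.Primes → ℕ∞

namespace SteinitzNum

/-- The Steinitz number associated to a natural number. -/
def ofNat (n : ℕ) : SteinitzNum := fun p => (n.factorization (p : ℕ) : ℕ∞)

/-- Multiplication of Steinitz numbers adds the exponents at each prime. -/
instance : Mul SteinitzNum := ⟨fun a b p => a p + b p⟩

/-- The least common multiple of a collection of positive integers, as a Steinitz number:
its exponent at `p` is the supremum of the `p`-adic valuations of the elements. -/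
def lcmSet (S : Set ℕ) : SteinitzNum := fun p => ⨆ n ∈ S, (n.factorization (p : ℕ) : ℕ∞)

/-- Two Steinitz numbers are asymptotically equivalent if they agree after multiplication
by positive integers. -/
def AsympEquiv (a b : SteinitzNum) : Prop :=
  ∃ n₀ m₀ : ℕ, 0 < n₀ ∧ 0 < m₀ ∧ ofNat n₀ * a = ofNat m₀ * b

/-- The prime spectrum of a Steinitz number: primes with nonzero exponent. -/
def primeSpectrum (a : SteinitzNum) : Set Nat.Primes := { p | a p ≠ 0 }

/-- The finite prime spectrum: primes with finite nonzero exponent. -/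
def finitePrimeSpectrum (a : SteinitzNum) : Set Nat.Primes := { p | a p ≠ 0 ∧ a p ≠ ⊤ }

/-- The infinite prime spectrum: primes with infinite exponent. -/
def infinitePrimeSpectrum (a : SteinitzNum) : Set Nat.Primes := { p | a p = ⊤ }

end SteinitzNum

/-! ### Steinitz orders for topological groups -/

/-- The Steinitz order of a topological group: the LCM of the orders of the finite
quotients `G/N` over open normal subgroups `N ⊆ G`. -/
def steinitzOrder (G : Type*) [Group G] [TopologicalSpace G] : SteinitzNum :=
  SteinitzNum.lcmSet
    { n | ∃ N : Subgroup G, N.Normal ∧ IsOpen (N : Set G) ∧ n = Nat.card (G ⧸ N) }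

/-- The Steinitz order of a subgroup `D` of a topological group `G`: the LCM of the
cardinalities `|D/(N ∩ D)|` over open normal subgroups `N ⊆ G`. -/
def steinitzOrderOfSubgroup {G : Type*} [Group G] [TopologicalSpace G] (D : Subgroup G) :
    SteinitzNum :=
  SteinitzNum.lcmSet
    { n | ∃ N : Subgroup G, N.Normal ∧ IsOpen (N : Set G) ∧
        n = Nat.card (↥D ⧸ (N.subgroupOf D)) }

/-- The relative Steinitz order of a subgroup `D` of a topological group `G`: the LCM of the
cardinalities `|G/(N · D)|` over open normal subgroups `N ⊆ G`. -/
def steinitzRelativeOrder {G : Type*} [Group G] [TopologicalSpace G] (D : Subgroup G) :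
    SteinitzNum :=
  SteinitzNum.lcmSet
    { n | ∃ N : Subgroup G, N.Normal ∧ IsOpen (N : Set G) ∧ n = Nat.card (G ⧸ (N ⊔ D)) }

/-- A profinite (compact Hausdorff totally disconnected) topological group is topologically
Noetherian if every increasing chain of closed subgroups has a maximal element. -/
def TopologicallyNoetherian (G : Type*) [Group G] [TopologicalSpace G] : Prop :=
  ∀ c : ℕ → Subgroup G, (∀ i, IsClosed (c i : Set G)) → Monotone c → ∃ i₀, ∀ i, c i ≤ c i₀

/-! ### Cantor actions -/

section CantorActions

variable {X : Type*} [MetricSpace X] {Γ : Type*} [Group Γ]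

/-- An action is minimal if every orbit is dense. -/
def IsMinimalAction (Φ : Γ →* (X ≃ₜ X)) : Prop :=
  ∀ x : X, Dense (Set.range fun g : Γ => Φ g x)

/-- An action is equicontinuous if it satisfies the uniform `ε`-`δ` condition with respect
to the metric. -/
def IsEquicontinuousAction (Φ : Γ →* (X ≃ₜ X)) : Prop :=
  ∀ ε : ℝ, 0 < ε → ∃ δ : ℝ, 0 < δ ∧
    ∀ x y : X, dist x y < δ → ∀ g : Γ, dist (Φ g x) (Φ g y) < ε

variable [CompactSpace X]

/-- `G(Φ)`: the closure of the image of `Γ` in `Homeo(X)`, in the uniform topology. -/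
def profiniteClosure (Φ : Γ →* (X ≃ₜ X)) : Subgroup (X ≃ₜ X) :=
  Φ.range.topologicalClosure

/-- The discriminant group: the isotropy subgroup of `G(Φ)` at `x`. -/
def discriminant (Φ : Γ →* (X ≃ₜ X)) (x : X) : Subgroup (profiniteClosure Φ) where
  carrier := { h | (h : X ≃ₜ X) x = x }
  one_mem' := rfl
  mul_mem' := by
    intro a b ha hb
    simp only [Set.mem_setOf_eq] at *
    show ((a : X ≃ₜ X) * (b : X ≃ₜ X)) x = x
    rw [Homeomorph.mul_apply', hb, ha]
  inv_mem' := by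
    intro a ha
    simp only [Set.mem_setOf_eq] at *
    show ((a : X ≃ₜ X)⁻¹) x = x
    rw [Homeomorph.inv_eq_symm]
    conv_lhs => rw [← ha]
    exact Homeomorph.symm_apply_apply _ _

/-- The Steinitz order `Π[G(Φ)]` of a Cantor action. -/
def steinitzOrderAction (Φ : Γ →* (X ≃ₜ X)) : SteinitzNum :=
  steinitzOrder ↥(profiniteClosure Φ)

/-- The Steinitz order `Π[D(Φ,x)]` of the discriminant of a Cantor action. -/
def steinitzOrderDisc (Φ : Γ →* (X ≃ₜ X)) (x : X) : SteinitzNum :=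
  steinitzOrderOfSubgroup (discriminant Φ x)

/-- The relative Steinitz order `Π[G(Φ) : D(Φ,x)]` of a Cantor action. -/
def steinitzOrderRel (Φ : Γ →* (X ≃ₜ X)) (x : X) : SteinitzNum :=
  steinitzRelativeOrder (discriminant Φ x)

end CantorActions

/-! ### Adapted sets, holonomy and return equivalence -/

section Adapted

variable {X : Type*} [MetricSpace X] {Γ : Type*} [Group Γ]

/-- A nonempty clopen subset `U ⊆ X` is adapted to the action `Φ` if every group element
either fixes `U` or moves it entirely off of itself. -/
def IsAdaptedSet (Φ : Γ →* (X ≃ₜ X)) (U : Set X) : Prop :=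
  U.Nonempty ∧ IsClopen U ∧ ∀ g : Γ, ((Φ g) '' U ∩ U).Nonempty → (Φ g) '' U = U

/-- The stabilizer subgroup `Γ_U` of an adapted set. -/
def adaptedStabilizer (Φ : Γ →* (X ≃ₜ X)) (U : Set X) : Subgroup Γ where
  carrier := { g | (Φ g) '' U = U }
  one_mem' := by
    show (Φ 1) '' U = U
    rw [map_one]
    exact Set.image_id U
  mul_mem' := by
    intro a b ha hb
    simp only [Set.mem_setOf_eq] at *
    rw [map_mul]
    show ((Φ a) * (Φ b)) '' U = U
    have : (((Φ a) * (Φ b) : X ≃ₜ X) : X → X) = (Φ a) ∘ (Φ b) := rfl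
    rw [this, Set.image_comp, hb, ha]
  inv_mem' := by
    intro a ha
    simp only [Set.mem_setOf_eq] at *
    rw [map_inv, Homeomorph.inv_eq_symm]
    conv_lhs => rw [← ha]
    rw [← Set.image_comp]
    simp

/-- The homeomorphism of an invariant set induced by a homeomorphism of `X`. -/
def restrictHomeo (h : X ≃ₜ X) {U : Set X} (hU : h '' U = U) : U ≃ₜ U :=
  (h.image U).trans (Homeomorph.setCongr hU)

@[simp] theorem restrictHomeo_coe (h : X ≃ₜ X) {U : Set X} (hU : h '' U = U) (x : U) :
    (restrictHomeo h hU x : X) = h x := rfl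

/-- The holonomy homomorphism of an adapted set: restriction of the stabilizer to `U`. -/
def holonomyHom (Φ : Γ →* (X ≃ₜ X)) (U : Set X) :
    adaptedStabilizer Φ U →* (↥U ≃ₜ ↥U) where
  toFun g := restrictHomeo (Φ (g : Γ)) g.2
  map_one' := by
    ext x
    show ((restrictHomeo (Φ ((1 : adaptedStabilizer Φ U) : Γ)) _ x : X) = _)
    simp
  map_mul' := by
    intro a b
    ext x
    show ((restrictHomeo (Φ ((a * b : adaptedStabilizer Φ U) : Γ)) _ x : X) = _)
    simp only [restrictHomeo_coe, Subgroup.coe_mul, map_mul]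
    rfl

/-- The holonomy group `H_U` of an adapted set: the image of the stabilizer in `Homeo(U)`. -/
def holonomyGroup (Φ : Γ →* (X ≃ₜ X)) (U : Set X) : Subgroup (↥U ≃ₜ ↥U) :=
  (holonomyHom Φ U).range

end Adapted

/-- Two Cantor actions are return equivalent if they admit adapted sets whose holonomy
actions are isomorphic, via a homeomorphism between the adapted sets together with a
compatible isomorphism of the holonomy groups. -/
def ReturnEquivalent
    {X₁ : Type*} [MetricSpace X₁] {Γ₁ : Type*} [Group Γ₁]
    {X₂ : Type*} [MetricSpace X₂] {Γ₂ : Type*} [Group Γ₂]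
    (Φ₁ : Γ₁ →* (X₁ ≃ₜ X₁)) (Φ₂ : Γ₂ →* (X₂ ≃ₜ X₂)) : Prop :=
  ∃ (U₁ : Set X₁) (U₂ : Set X₂), IsAdaptedSet Φ₁ U₁ ∧ IsAdaptedSet Φ₂ U₂ ∧
    ∃ (h : ↥U₁ ≃ₜ ↥U₂) (θ : holonomyGroup Φ₁ U₁ ≃* holonomyGroup Φ₂ U₂),
      ∀ k : holonomyGroup Φ₁ U₁,
        ((θ k : ↥U₂ ≃ₜ ↥U₂)) = h.symm.trans (((k : ↥U₁ ≃ₜ ↥U₁)).trans h)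

section Regularity

variable {X : Type*} [MetricSpace X]

/-- An action of a group `H` on `X` through a homomorphism `ρ : H →* Homeo(X)` is locally
quasi-analytic if there is `ε > 0` so that for every nonempty open `U` of diameter less
than `ε`, any element acting as the identity on a nonempty open subset `V ⊆ U` with
`ρ g (V) = V` acts as the identity on all of `U`. -/
def IsLocallyQuasiAnalytic {H : Type*} [Group H] (ρ : H →* (X ≃ₜ X)) : Prop :=
  ∃ ε : ℝ, 0 < ε ∧ ∀ U : Set X, IsOpen U → U.Nonempty → Metric.diam U < ε →
    ∀ V : Set X, V ⊆ U → IsOpen V → V.Nonempty →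
      ∀ g : H, (ρ g) '' V = V → (∀ x ∈ V, ρ g x = x) → ∀ x ∈ U, ρ g x = x

variable [CompactSpace X] {Γ : Type*} [Group Γ]

/-- A Cantor action is stable if the induced action of `G(Φ)` on `X` is locally
quasi-analytic; otherwise it is wild. -/
def IsStableAction (Φ : Γ →* (X ≃ₜ X)) : Prop :=
  IsLocallyQuasiAnalytic (profiniteClosure Φ).subtype

/-- An action is topologically free if the set of points fixed by some nontrivial group
element is meagre. -/
def IsTopologicallyFree (Φ : Γ →* (X ≃ₜ X)) : Prop :=
  IsMeagre { x : X | ∃ g : Γ, g ≠ 1 ∧ Φ g x = x }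

end Regularity

/-! ### The integer Heisenberg group -/

/-- The integer Heisenberg group: `ℤ³` with the multiplication
`(a,b,c)·(a',b',c') = (a+a', b+b', c+c'+ab')`. -/
@[ext] structure Heisenberg where
  a : ℤ
  b : ℤ
  c : ℤ

namespace Heisenberg

instance : Mul Heisenberg :=
  ⟨fun x y => ⟨x.a + y.a, x.b + y.b, x.c + y.c + x.a * y.b⟩⟩

instance : One Heisenberg := ⟨⟨0, 0, 0⟩⟩

instance : Inv Heisenberg := ⟨fun x => ⟨-x.a, -x.b, -x.c + x.a * x.b⟩⟩

@[simp] theorem mul_a (x y : Heisenberg) : (x * y).a = x.a + y.a := rfl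
@[simp] theorem mul_b (x y : Heisenberg) : (x * y).b = x.b + y.b := rfl
@[simp] theorem mul_c (x y : Heisenberg) : (x * y).c = x.c + y.c + x.a * y.b := rfl
@[simp] theorem one_a : (1 : Heisenberg).a = 0 := rfl
@[simp] theorem one_b : (1 : Heisenberg).b = 0 := rfl
@[simp] theorem one_c : (1 : Heisenberg).c = 0 := rfl
@[simp] theorem inv_a (x : Heisenberg) : x⁻¹.a = -x.a := rfl
@[simp] theorem inv_b (x : Heisenberg) : x⁻¹.b = -x.b := rfl
@[simp] theorem inv_c (x : Heisenberg) : x⁻¹.c = -x.c + x.a * x.b := rfl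

instance : Group Heisenberg where
  mul := (· * ·)
  one := 1
  inv := (·⁻¹)
  mul_assoc x y z := by ext <;> simp <;> ring
  one_mul x := by ext <;> simp
  mul_one x := by ext <;> simp
  inv_mul_cancel x := by ext <;> simp

instance : Countable Heisenberg :=
  Function.Injective.countable (f := fun x : Heisenberg => (x.a, x.b, x.c))
    (by
      intro x y h
      injection h with h1 h2
      injection h2 with h3 h4
      ext <;> assumption)

end Heisenberg

/-- A minimal equicontinuous Cantor action of the integer Heisenberg group, bundled with
its Cantor space. -/
structure HeisenbergCantorAction where
  /-- the Cantor space -/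
  X : Type
  [ms : MetricSpace X]
  [cs : CompactSpace X]
  [ne : Nonempty X]
  [td : TotallyDisconnectedSpace X]
  perf : Perfect (Set.univ : Set X)
  /-- the action of the Heisenberg group by homeomorphisms -/
  act : Heisenberg →* (X ≃ₜ X)
  minimal : IsMinimalAction act
  equicontinuous : IsEquicontinuousAction act

attribute [instance] HeisenbergCantorAction.ms HeisenbergCantorAction.cs
  HeisenbergCantorAction.ne HeisenbergCantorAction.td

set_option linter.unusedVariables false

/-- Heisenberg group over a commutative ring. -/
@[ext] structure HeisM (R : Type) [CommRing R] where
  a : R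
  b : R
  c : R

namespace HeisM
variable {R : Type} [CommRing R]

instance : Mul (HeisM R) := ⟨fun x y => ⟨x.a + y.a, x.b + y.b, x.c + y.c + x.a * y.b⟩⟩
instance : One (HeisM R) := ⟨⟨0, 0, 0⟩⟩
instance : Inv (HeisM R) := ⟨fun x => ⟨-x.a, -x.b, -x.c + x.a * x.b⟩⟩

@[simp] theorem mul_a (x y : HeisM R) : (x * y).a = x.a + y.a := rfl
@[simp] theorem mul_b (x y : HeisM R) : (x * y).b = x.b + y.b := rfl
@[simp] theorem mul_c (x y : HeisM R) : (x * y).c = x.c + y.c + x.a * y.b := rfl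
@[simp] theorem one_a : (1 : HeisM R).a = 0 := rfl
@[simp] theorem one_b : (1 : HeisM R).b = 0 := rfl
@[simp] theorem one_c : (1 : HeisM R).c = 0 := rfl
@[simp] theorem inv_a (x : HeisM R) : x⁻¹.a = -x.a := rfl
@[simp] theorem inv_b (x : HeisM R) : x⁻¹.b = -x.b := rfl
@[simp] theorem inv_c (x : HeisM R) : x⁻¹.c = -x.c + x.a * x.b := rfl

instance : Group (HeisM R) where
  mul_assoc x y z := by ext <;> simp <;> ring
  one_mul x := by ext <;> simp
  mul_one x := by ext <;> simp
  inv_mul_cancel x := by ext <;> simp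

/-- The equivalence with the product, to compute cardinality. -/
def prodEquiv : HeisM R ≃ R × R × R where
  toFun x := (x.a, x.b, x.c)
  invFun p := ⟨p.1, p.2.1, p.2.2⟩
  left_inv x := rfl
  right_inv p := rfl

instance [Finite R] : Finite (HeisM R) := Finite.of_equiv _ prodEquiv.symm

theorem natCard (R : Type) [CommRing R] [Finite R] :
    Nat.card (HeisM R) = (Nat.card R) ^ 3 := by
  rw [Nat.card_congr (prodEquiv (R := R)), Nat.card_prod, Nat.card_prod]
  ring

/-- powers of the generator a. -/
theorem aPow (t : R) (n : ℕ) : (⟨t, 0, 0⟩ : HeisM R) ^ n = ⟨n • t, 0, 0⟩ := by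
  induction n with
  | zero => ext <;> simp
  | succ n ih => rw [pow_succ, ih]; ext <;> simp [add_smul] <;> ring

/-- The reduction homomorphism from the integer Heisenberg group. -/
def ofInt' (x y z : ℤ) : HeisM R := ⟨(x : R), (y : R), (z : R)⟩

end HeisM
namespace HeisM
variable {R : Type} [CommRing R]

/-- The subgroup `{(t,0,0)}`. -/
def Dsub (R : Type) [CommRing R] : Subgroup (HeisM R) where
  carrier := {x | x.b = 0 ∧ x.c = 0}
  one_mem' := ⟨rfl, rfl⟩
  mul_mem' := by rintro x y ⟨hb, hc⟩ ⟨hb', hc'⟩; constructor <;> simp [hb, hc, hb', hc']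
  inv_mem' := by rintro x ⟨hb, hc⟩; constructor <;> simp [hb, hc]

theorem mem_Dsub {x : HeisM R} : x ∈ Dsub R ↔ x.b = 0 ∧ x.c = 0 := Iff.rfl

/-- The coset space. -/
def Yq (R : Type) [CommRing R] : Type := HeisM R ⧸ Dsub R

instance : Nonempty (Yq R) := ⟨QuotientGroup.mk (s := Dsub R) 1⟩
instance [Finite R] : Finite (Yq R) := Quotient.finite _
instance : MulAction (HeisM R) (Yq R) :=
  inferInstanceAs (MulAction (HeisM R) (HeisM R ⧸ Dsub R))
instance : UniformSpace (Yq R) := ⊥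
instance : DiscreteTopology (Yq R) :=
  discreteTopology_of_discrete_uniformity rfl

/-- class of an element -/
def cls (x : HeisM R) : Yq R := QuotientGroup.mk (s := Dsub R) x

theorem cls_surjective : Function.Surjective (cls (R := R)) :=
  Quotient.exists_rep

@[simp] theorem smul_cls (g x : HeisM R) : g • (cls x) = cls (g * x) := rfl

theorem cls_eq_cls {x y : HeisM R} : cls x = cls y ↔ x⁻¹ * y ∈ Dsub R :=
  QuotientGroup.eq

theorem smul_cls_eq_iff {g x : HeisM R} : g • cls x = cls x ↔ x⁻¹ * g * x ∈ Dsub R := by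
  rw [smul_cls, cls_eq_cls]
  constructor <;> intro h
  · have := (Dsub R).inv_mem h
    simp only [mul_inv_rev, inv_inv] at this
    convert this using 1
    group
  · have := (Dsub R).inv_mem h
    simp only [mul_inv_rev, inv_inv] at this
    convert this using 1
    group

/-- The fixed basepoint for the `a`-translation. -/
theorem aGen_smul_one : (⟨1,0,0⟩ : HeisM R) • (cls (1 : HeisM R)) = cls (1 : HeisM R) := by
  rw [smul_cls_eq_iff]
  constructor <;> simp

/-- If `g ≠ 1` then `g` moves some coset in `Yq R`. -/
theorem exists_moved_cls {g : HeisM R} (hg : g ≠ 1) : ∃ y : Yq R, g • y ≠ y := by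
  by_cases hbc : g.b = 0 ∧ g.c = 0
  · -- then g.a ≠ 0 ; the coset of (0,1,0) is moved
    have ha : g.a ≠ 0 := by
      intro h0
      exact hg (by ext <;> simp [h0, hbc.1, hbc.2])
    refine ⟨cls ⟨0,1,0⟩, ?_⟩
    rw [Ne, smul_cls_eq_iff, mem_Dsub]
    intro ⟨h1, h2⟩
    apply ha
    simpa [hbc.1, hbc.2] using h2
  · refine ⟨cls (1 : HeisM R), ?_⟩
    rw [Ne, smul_cls_eq_iff, mem_Dsub]
    simpa using hbc

/-- The `a`-translation moves the coset of `(0,1,0)` provided `1 ≠ 0` in `R`. -/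
theorem aGen_moves [Nontrivial R] :
    (⟨1,0,0⟩ : HeisM R) • (cls (⟨0,1,0⟩ : HeisM R)) ≠ cls ⟨0,1,0⟩ := by
  rw [Ne, smul_cls_eq_iff, mem_Dsub]
  intro ⟨h1, h2⟩
  simp at h2

end HeisM
/-! ### The product space -/

namespace HeisFam

open HeisM PiNat

variable (g : ℕ → ℕ)

/-- A sequence of (distinct) primes. -/
class PrimeSeq (g : ℕ → ℕ) : Prop where
  prime : ∀ n, (g n).Prime

section
variable {g : ℕ → ℕ} [PrimeSeq g] (n : ℕ)
instance : Fact ((g n).Prime) := ⟨PrimeSeq.prime n⟩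
instance : Fact (1 < g n) := ⟨(PrimeSeq.prime (g := g) n).one_lt⟩
instance : NeZero (g n) := ⟨(PrimeSeq.prime (g := g) n).pos.ne'⟩
end

/-- The reduction homomorphism. -/
def rho (m : ℕ) : Heisenberg →* HeisM (ZMod m) where
  toFun γ := ⟨(γ.a : ZMod m), (γ.b : ZMod m), (γ.c : ZMod m)⟩
  map_one' := by ext <;> simp
  map_mul' x y := by ext <;> push_cast <;> simp

@[simp] theorem rho_a (m : ℕ) (γ : Heisenberg) : (rho m γ).a = (γ.a : ZMod m) := rfl
@[simp] theorem rho_b (m : ℕ) (γ : Heisenberg) : (rho m γ).b = (γ.b : ZMod m) := rfl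
@[simp] theorem rho_c (m : ℕ) (γ : Heisenberg) : (rho m γ).c = (γ.c : ZMod m) := rfl

/-- The product space on which the Heisenberg group acts. -/
abbrev XS : Type := ∀ n : ℕ, Yq (ZMod (g n))

noncomputable instance : MetricSpace (XS g) :=
  PiNat.metricSpaceOfDiscreteUniformity (E := fun n => Yq (ZMod (g n)))
    (fun _ => bot_uniformity)

instance : Nonempty (XS g) := by
  refine ⟨fun n => QuotientGroup.mk (s := Dsub (ZMod (g n))) 1⟩

theorem dist_le_pow {x y : XS g} {n : ℕ} (h : ∀ i < n, x i = y i) :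
    dist x y ≤ (1 / 2 : ℝ) ^ n :=
  PiNat.mem_cylinder_iff_dist_le.mp h

theorem apply_eq_of_dist_lt' {x y : XS g} {n : ℕ} (h : dist x y < (1 / 2 : ℝ) ^ n)
    {i : ℕ} (hi : i ≤ n) : x i = y i :=
  PiNat.apply_eq_of_dist_lt h hi

theorem dist_map_le (F : ∀ n, Yq (ZMod (g n)) ≃ Yq (ZMod (g n))) (x y : XS g) :
    dist (fun n => F n (x n)) (fun n => F n (y n)) ≤ dist x y := by
  rcases eq_or_ne x y with rfl | hne
  · simp
  · have h1 : dist x y = (1 / 2 : ℝ) ^ (firstDiff x y) := PiNat.dist_eq_of_ne hne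
    rw [h1]
    apply dist_le_pow
    intro i hi
    rw [PiNat.apply_eq_of_lt_firstDiff hi]

theorem isometry_piMap (F : ∀ n, Yq (ZMod (g n)) ≃ Yq (ZMod (g n))) :
    Isometry (fun (x : XS g) (n : ℕ) => F n (x n)) := by
  apply Isometry.of_dist_eq
  intro x y
  apply le_antisymm (dist_map_le g F x y)
  have h2 := dist_map_le g (fun n => (F n).symm) (fun n => F n (x n)) (fun n => F n (y n))
  simpa using h2

end HeisFam
namespace HeisFam

open HeisM PiNat

variable (g : ℕ → ℕ) [PrimeSeq g]

instance : CompactSpace (XS g) := by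
  haveI : ∀ n, CompactSpace (Yq (ZMod (g n))) := fun n => Finite.compactSpace
  show CompactSpace (∀ n : ℕ, Yq (ZMod (g n)))
  infer_instance

instance : TotallyDisconnectedSpace (XS g) := by
  show TotallyDisconnectedSpace (∀ n : ℕ, Yq (ZMod (g n)))
  infer_instance

/-- Any coset space over a nontrivial ring has at least two points. -/
theorem exists_ne_cls {R : Type} [CommRing R] [Nontrivial R] (y : Yq R) :
    ∃ y' : Yq R, y' ≠ y := by
  obtain ⟨h, rfl⟩ := cls_surjective y
  refine ⟨cls (h * ⟨0, 1, 0⟩), ?_⟩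
  rw [Ne, cls_eq_cls]
  intro hmem
  have : (⟨0,1,0⟩ : HeisM R)⁻¹ ∈ Dsub R := by
    convert hmem using 1
    group
  rcases this with ⟨h1, _⟩
  simp at h1

theorem perfect_univ : Perfect (Set.univ : Set (XS g)) := by
  constructor
  · exact isClosed_univ
  · intro x _
    rw [accPt_iff_nhds]
    intro U hU
    obtain ⟨ε, hε, hball⟩ := Metric.mem_nhds_iff.mp hU
    obtain ⟨n, hn⟩ : ∃ n : ℕ, (1 / 2 : ℝ) ^ n < ε :=
      exists_pow_lt_of_lt_one hε (by norm_num)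
    haveI : Nontrivial (ZMod (g n)) := ZMod.nontrivial _
    obtain ⟨y', hy'⟩ := exists_ne_cls (x n)
    refine ⟨Function.update x n y', ⟨hball ?_, trivial⟩, ?_⟩
    · apply Metric.mem_ball.mpr
      rw [dist_comm]
      calc dist x (Function.update x n y') ≤ (1/2:ℝ)^n := by
            apply dist_le_pow
            intro i hi
            rw [Function.update_of_ne (by omega)]
        _ < ε := hn
    · intro hEq
      apply hy'
      have := congrFun hEq n
      rwa [Function.update_self] at this

end HeisFam
namespace HeisFam

open HeisM PiNat

variable (g : ℕ → ℕ) [PrimeSeq g]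

/-- The underlying equivalence of the action of `γ`. -/
def actEquiv (γ : Heisenberg) : XS g ≃ XS g where
  toFun x := fun n => rho (g n) γ • x n
  invFun x := fun n => (rho (g n) γ)⁻¹ • x n
  left_inv x := by funext n; simp
  right_inv x := by funext n; simp

theorem isometry_actEquiv (γ : Heisenberg) : Isometry (actEquiv g γ) :=
  isometry_piMap g (fun n => MulAction.toPerm (rho (g n) γ))

theorem isometry_actEquiv_symm (γ : Heisenberg) : Isometry (actEquiv g γ).symm :=
  isometry_piMap g (fun n => MulAction.toPerm ((rho (g n) γ)⁻¹))

/-- The action of the Heisenberg group on `XS g`. -/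
def Phi : Heisenberg →* (XS g ≃ₜ XS g) where
  toFun γ :=
    { toEquiv := actEquiv g γ
      continuous_toFun := (isometry_actEquiv g γ).continuous
      continuous_invFun := (isometry_actEquiv_symm g γ).continuous }
  map_one' := by
    apply Homeomorph.ext
    intro x
    funext n
    show rho (g n) 1 • x n = x n
    simp
  map_mul' γ δ := by
    apply Homeomorph.ext
    intro x
    funext n
    show rho (g n) (γ * δ) • x n = rho (g n) γ • (rho (g n) δ • x n)
    rw [map_mul, mul_smul]

@[simp] theorem Phi_apply (γ : Heisenberg) (x : XS g) (n : ℕ) :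
    Phi g γ x n = rho (g n) γ • x n := rfl

theorem dist_Phi (γ : Heisenberg) (x y : XS g) : dist (Phi g γ x) (Phi g γ y) = dist x y :=
  (isometry_actEquiv g γ).dist_eq x y

theorem equicontinuous_Phi : IsEquicontinuousAction (Phi g) := by
  intro ε hε
  exact ⟨ε, hε, fun x y h γ => by rwa [dist_Phi]⟩

/-- Chinese remainder for finitely many distinct primes. -/
theorem int_crt (hinj : Function.Injective g) (N : ℕ)
    (t : ∀ n, ZMod (g n)) : ∃ a : ℤ, ∀ n < N, (a : ZMod (g n)) = t n := by
  induction N with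
  | zero => exact ⟨0, by omega⟩
  | succ N ih =>
    obtain ⟨a, ha⟩ := ih
    set M : ℕ := ∏ i ∈ Finset.range N, g i with hM
    have hMn : ((M : ℤ) : ZMod (g N)) ≠ 0 := by
      rw [Int.cast_natCast, Ne, ZMod.natCast_eq_zero_iff]
      intro hdvd
      obtain ⟨i, hi, hgd⟩ := (Nat.Prime.prime (PrimeSeq.prime (g := g) N)).exists_mem_finset_dvd hdvd
      rw [Finset.mem_range] at hi
      have : g N = g i := (Nat.prime_dvd_prime_iff_eq (PrimeSeq.prime (g := g) N) (PrimeSeq.prime (g := g) i)).mp hgd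
      have := hinj this
      omega
    set u : ZMod (g N) := ((M : ℤ) : ZMod (g N)) with hu
    set v : ZMod (g N) := u⁻¹ * (t N - (a : ZMod (g N))) with hv
    refine ⟨a + (M : ℤ) * (v.val : ℤ), ?_⟩
    intro n hn
    rcases Nat.lt_succ_iff_lt_or_eq.mp hn with h | rfl
    · have hM0 : ((M : ℕ) : ZMod (g n)) = 0 := by
        rw [ZMod.natCast_eq_zero_iff]
        exact Finset.dvd_prod_of_mem g (Finset.mem_range.mpr h)
      push_cast
      rw [hM0, zero_mul, add_zero]
      exact ha n h
    · haveI : NeZero (g n) := ⟨(PrimeSeq.prime (g := g) n).pos.ne'⟩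
      have hval : ((v.val : ℕ) : ZMod (g n)) = v := by
        rw [ZMod.natCast_val, ZMod.cast_id]
      have hMu : ((M : ℕ) : ZMod (g n)) = u := by rw [hu, Int.cast_natCast]
      push_cast
      rw [hval, hMu, hv, ← mul_assoc, mul_inv_cancel₀ hMn, one_mul]
      ring

/-- Surjectivity of the reduction onto finite products. -/
theorem exists_gamma (hinj : Function.Injective g) (N : ℕ)
    (t : ∀ n, HeisM (ZMod (g n))) : ∃ γ : Heisenberg, ∀ n < N, rho (g n) γ = t n := by
  obtain ⟨A, hA⟩ := int_crt g hinj N (fun n => (t n).a)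
  obtain ⟨B, hB⟩ := int_crt g hinj N (fun n => (t n).b)
  obtain ⟨C, hC⟩ := int_crt g hinj N (fun n => (t n).c)
  refine ⟨⟨A, B, C⟩, fun n hn => ?_⟩
  ext
  · exact hA n hn
  · exact hB n hn
  · exact hC n hn

theorem minimal_Phi (hinj : Function.Injective g) :
    IsMinimalAction (Phi g) := by
  intro x
  rw [dense_iff_closure_eq, Set.eq_univ_iff_forall]
  intro y
  rw [Metric.mem_closure_iff]
  intro ε hε
  obtain ⟨N, hN⟩ : ∃ N : ℕ, (1 / 2 : ℝ) ^ N < ε :=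
    exists_pow_lt_of_lt_one hε (by norm_num)
  choose k hk using fun n => cls_surjective (x n)
  choose h hh using fun n => cls_surjective (y n)
  obtain ⟨γ, hγ⟩ := exists_gamma g hinj N (fun n => h n * (k n)⁻¹)
  refine ⟨Phi g γ x, Set.mem_range_self γ, ?_⟩
  have : dist y (Phi g γ x) ≤ (1/2:ℝ)^N := by
    apply dist_le_pow
    intro i hi
    rw [Phi_apply, ← hk i, ← hh i, smul_cls, hγ i hi, inv_mul_cancel_right]
  calc dist y (Phi g γ x) ≤ (1/2:ℝ)^N := this
    _ < ε := hN

end HeisFam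
namespace HeisFam

open HeisM PiNat

variable (g : ℕ → ℕ) [PrimeSeq g]

/-! ### Topological freeness -/

theorem exists_rho_ne_one (hinj : Function.Injective g)
    {γ : Heisenberg} (hγ : γ ≠ 1) (N : ℕ) : ∃ n, N ≤ n ∧ rho (g n) γ ≠ 1 := by
  set M : ℕ := γ.a.natAbs + γ.b.natAbs + γ.c.natAbs with hM
  have hfin : {n | g n ≤ M}.Finite := by
    have : {n | g n ≤ M} = g ⁻¹' (Set.Iic M) := rfl
    rw [this]
    exact Set.Finite.preimage hinj.injOn (Set.finite_Iic M)
  obtain ⟨K, hK⟩ := hfin.bddAbove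
  refine ⟨max N (K + 1), le_max_left _ _, ?_⟩
  set n := max N (K + 1) with hn
  have hgn : M < g n := by
    by_contra hle
    have : n ∈ {n | g n ≤ M} := by simpa using by omega
    have := hK this
    omega
  intro h1
  have hcomp : ∀ z : ℤ, (z : ZMod (g n)) = 0 → z.natAbs ≤ M → z = 0 := by
    intro z hz hzM
    by_contra hz0
    have hdvd : (g n : ℤ) ∣ z := (ZMod.intCast_zmod_eq_zero_iff_dvd z (g n)).mp hz
    have : (g n : ℤ) ≤ |z| := Int.le_of_dvd (abs_pos.mpr hz0) ((dvd_abs _ _).mpr hdvd)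
    rw [Int.abs_eq_natAbs] at this
    have : g n ≤ z.natAbs := by exact_mod_cast this
    omega
  have ha : γ.a = 0 := hcomp γ.a (congrArg HeisM.a h1) (by omega)
  have hb : γ.b = 0 := hcomp γ.b (congrArg HeisM.b h1) (by omega)
  have hc : γ.c = 0 := hcomp γ.c (congrArg HeisM.c h1) (by omega)
  exact hγ (by ext <;> simp [ha, hb, hc])

theorem meagre_of_closed_empty_interior {Z : Type*} [TopologicalSpace Z] {s : Set Z}
    (hc : IsClosed s) (hi : interior s = ∅) : IsMeagre s := by
  rw [isMeagre_iff_countable_union_isNowhereDense]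
  refine ⟨{s}, ?_, Set.countable_singleton s, by simp⟩
  intro t ht
  rw [Set.mem_singleton_iff] at ht
  subst ht
  exact (hc.isNowhereDense_iff).mpr hi

theorem topFree_Phi (hinj : Function.Injective g) :
    IsTopologicallyFree (Phi g) := by
  obtain ⟨f, hf⟩ := (exists_surjective_nat Heisenberg)
  have key : ∀ γ : Heisenberg, IsMeagre {x : XS g | γ ≠ 1 ∧ Phi g γ x = x} := by
    intro γ
    by_cases hγ : γ = 1
    · simpa [hγ] using IsMeagre.empty
    · apply meagre_of_closed_empty_interior
      · have : {x : XS g | γ ≠ 1 ∧ Phi g γ x = x} = {x : XS g | Phi g γ x = x} := by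
          ext x; simp [hγ]
        rw [this]
        exact isClosed_eq (Phi g γ).continuous continuous_id
      · rw [Set.eq_empty_iff_forall_notMem]
        intro x hx
        rw [mem_interior_iff_mem_nhds, Metric.mem_nhds_iff] at hx
        obtain ⟨ε, hε, hball⟩ := hx
        obtain ⟨N, hN⟩ : ∃ N : ℕ, (1 / 2 : ℝ) ^ N < ε :=
          exists_pow_lt_of_lt_one hε (by norm_num)
        obtain ⟨n, hnN, hρ⟩ := exists_rho_ne_one g hinj hγ N
        obtain ⟨y', hy'⟩ := exists_moved_cls hρ
        have hmem : Function.update x n y' ∈ Metric.ball x ε := by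
          rw [Metric.mem_ball, dist_comm]
          calc dist x (Function.update x n y') ≤ (1/2:ℝ)^n := by
                apply dist_le_pow
                intro i hi
                rw [Function.update_of_ne (by omega)]
            _ ≤ (1/2:ℝ)^N := by
                apply pow_le_pow_of_le_one (by norm_num) (by norm_num) hnN
            _ < ε := hN
        have := (hball hmem).2
        have hcoord := congrFun this n
        rw [Phi_apply, Function.update_self] at hcoord
        exact hy' hcoord
  have hsub : {x : XS g | ∃ γ : Heisenberg, γ ≠ 1 ∧ Phi g γ x = x} ⊆
      ⋃ n : ℕ, {x : XS g | f n ≠ 1 ∧ Phi g (f n) x = x} := by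
    intro x ⟨γ, hγ, hfix⟩
    obtain ⟨n, rfl⟩ := hf γ
    exact Set.mem_iUnion.mpr ⟨n, hγ, hfix⟩
  exact (isMeagre_iUnion (fun n => key (f n))).mono hsub

end HeisFam
namespace HeisFam

open HeisM PiNat

variable (g : ℕ → ℕ) [PrimeSeq g]

/-! ### Wildness -/

/-- The homeomorphism given by translation by an element of the product group. -/
def prodHomeo (h : ∀ n, HeisM (ZMod (g n))) : XS g ≃ₜ XS g where
  toEquiv :=
    { toFun := fun x n => h n • x n
      invFun := fun x n => (h n)⁻¹ • x n
      left_inv := fun x => by funext n; simp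
      right_inv := fun x => by funext n; simp }
  continuous_toFun := (isometry_piMap g (fun n => MulAction.toPerm (h n))).continuous
  continuous_invFun := (isometry_piMap g (fun n => MulAction.toPerm (h n)⁻¹)).continuous

@[simp] theorem prodHomeo_apply (h : ∀ n, HeisM (ZMod (g n))) (x : XS g) (n : ℕ) :
    prodHomeo g h x n = h n • x n := rfl

/-- The family which is the generator `a` at coordinate `n₀` and trivial elsewhere. -/
def delta (n₀ : ℕ) : ∀ n, HeisM (ZMod (g n)) :=
  fun n => if n = n₀ then ⟨1, 0, 0⟩ else 1

/-- The single-coordinate translation homeomorphism. -/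
def sigma (n₀ : ℕ) : XS g ≃ₜ XS g := prodHomeo g (delta g n₀)

theorem sigma_apply_ne (n₀ n : ℕ) (hn : n ≠ n₀) (x : XS g) : sigma g n₀ x n = x n := by
  show delta g n₀ n • x n = x n
  rw [delta, if_neg hn, one_smul]

theorem sigma_apply_self (n₀ : ℕ) (x : XS g) :
    sigma g n₀ x n₀ = (⟨1,0,0⟩ : HeisM (ZMod (g n₀))) • x n₀ := by
  show delta g n₀ n₀ • x n₀ = _
  rw [delta, if_pos rfl]

/-- Any product translation whose coordinates are realized by `Γ` up to level `K` is
`2⁻ᴷ`-approximated by the action of a group element. -/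
theorem dist_le_of_agree_le {f₁ f₂ : XS g ≃ₜ XS g} {K : ℕ}
    (h : ∀ x : XS g, ∀ n ≤ K, f₁ x n = f₂ x n) : dist f₁ f₂ ≤ (1/2:ℝ)^(K+1) := by
  rw [Homeomorph.dist_eq_contMap, ContinuousMap.dist_le (by positivity)]
  intro x
  apply dist_le_pow
  intro i hi
  exact h x i (by omega)

theorem sigma_mem_closure (hinj : Function.Injective g) (n₀ : ℕ) :
    (sigma g n₀ : XS g ≃ₜ XS g) ∈ profiniteClosure (Phi g) := by
  rw [profiniteClosure, ← SetLike.mem_coe, Subgroup.topologicalClosure_coe]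
  rw [Metric.mem_closure_iff]
  intro ε hε
  obtain ⟨K, hK⟩ : ∃ K : ℕ, (1 / 2 : ℝ) ^ K < ε :=
    exists_pow_lt_of_lt_one hε (by norm_num)
  obtain ⟨γ, hγ⟩ := exists_gamma g hinj (K + 1) (delta g n₀)
  refine ⟨Phi g γ, ⟨γ, rfl⟩, ?_⟩
  rw [dist_comm]
  calc dist (Phi g γ) (sigma g n₀)
      ≤ (1/2:ℝ)^(K+1) := by
        apply dist_le_of_agree_le
        intro x n hn
        show rho (g n) γ • x n = delta g n₀ n • x n
        rw [hγ n (by omega)]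
    _ ≤ (1/2:ℝ)^K := by apply pow_le_pow_of_le_one (by norm_num) (by norm_num); omega
    _ < ε := hK

theorem wild_Phi (hinj : Function.Injective g) :
    ¬ IsStableAction (Phi g) := by
  rintro ⟨ε, hε, H⟩
  -- basepoint
  set x₀ : XS g := fun n => cls (1 : HeisM (ZMod (g n))) with hx₀
  obtain ⟨N, hN⟩ : ∃ N : ℕ, (1 / 2 : ℝ) ^ N < ε :=
    exists_pow_lt_of_lt_one hε (by norm_num)
  set n₀ : ℕ := N + 1 with hn₀
  set U : Set (XS g) := PiNat.cylinder x₀ (N + 1) with hU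
  set V : Set (XS g) := U ∩ {x | x n₀ = cls (1 : HeisM (ZMod (g n₀)))} with hV
  have hUopen : IsOpen U := PiNat.isOpen_cylinder (E := fun n => Yq (ZMod (g n))) x₀ (N+1)
  have hUne : U.Nonempty := ⟨x₀, PiNat.self_mem_cylinder x₀ (N+1)⟩
  have hUdiam : Metric.diam U < ε := by
    have : Metric.diam U ≤ (1/2:ℝ)^(N+1) := by
      apply Metric.diam_le_of_forall_dist_le (by positivity)
      intro y hy z hz
      apply dist_le_pow
      intro i hi
      rw [PiNat.mem_cylinder_iff] at hy hz
      rw [hy i hi, hz i hi]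
    calc Metric.diam U ≤ (1/2:ℝ)^(N+1) := this
      _ ≤ (1/2:ℝ)^N := by apply pow_le_pow_of_le_one (by norm_num) (by norm_num); omega
      _ < ε := hN
  have hVopen : IsOpen V := by
    apply hUopen.inter
    have : ({x : XS g | x n₀ = cls (1 : HeisM (ZMod (g n₀)))}) =
        (fun x : XS g => x n₀) ⁻¹' {cls (1 : HeisM (ZMod (g n₀)))} := rfl
    rw [this]
    exact (continuous_apply n₀).isOpen_preimage _ (isOpen_discrete _)
  have hx₀V : x₀ ∈ V := ⟨PiNat.self_mem_cylinder _ _, rfl⟩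
  have hfix : ∀ x ∈ V, sigma g n₀ x = x := by
    rintro x ⟨-, hx⟩
    funext n
    rcases eq_or_ne n n₀ with rfl | hn
    · rw [sigma_apply_self, Set.mem_setOf_eq.mp hx]
      exact aGen_smul_one
    · exact sigma_apply_ne g n₀ n hn x
  have himg : (sigma g n₀) '' V = V := by
    rw [Set.image_congr hfix]
    exact Set.image_id V
  set gbar : profiniteClosure (Phi g) := ⟨sigma g n₀, sigma_mem_closure g hinj n₀⟩ with hgbar
  have hId : ∀ x ∈ U, (sigma g n₀) x = x :=
    H U hUopen hUne hUdiam V Set.inter_subset_left hVopen ⟨x₀, hx₀V⟩ gbar himg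
      (fun x hx => hfix x hx)
  -- now find a moved point in U
  haveI : Nontrivial (ZMod (g n₀)) := ZMod.nontrivial _
  set y : XS g := Function.update x₀ n₀ (cls (⟨0,1,0⟩ : HeisM (ZMod (g n₀)))) with hy
  have hyU : y ∈ U := by
    rw [hU, PiNat.mem_cylinder_iff]
    intro i hi
    rw [hy, Function.update_of_ne (by omega)]
  have hcoord := congrFun (hId y hyU) n₀
  rw [hy] at hcoord
  have heval : sigma g n₀ (Function.update x₀ n₀ (cls ⟨0,1,0⟩)) n₀ =
      (⟨1,0,0⟩ : HeisM (ZMod (g n₀))) • cls ⟨0,1,0⟩ := by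
    rw [sigma_apply_self, Function.update_self]
  rw [heval, Function.update_self] at hcoord
  exact aGen_moves hcoord

end HeisFam
namespace HeisFam

open HeisM PiNat

variable (g : ℕ → ℕ) [PrimeSeq g]

/-! ### Analysis of holonomy closures -/

/-- A nonempty clopen set is determined by finitely many coordinates. -/
theorem exists_depth {U : Set (XS g)} (hcl : IsClopen U) :
    ∃ N : ℕ, ∀ x ∈ U, ∀ y : XS g, (∀ i ≤ N, y i = x i) → y ∈ U := by
  obtain ⟨δ, hδ, hth⟩ := hcl.1.isCompact.exists_thickening_subset_open hcl.2 subset_rfl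
  obtain ⟨N, hN⟩ : ∃ N : ℕ, (1 / 2 : ℝ) ^ N < δ :=
    exists_pow_lt_of_lt_one hδ (by norm_num)
  refine ⟨N, fun x hx y hy => ?_⟩
  apply hth
  rw [Metric.mem_thickening_iff]
  refine ⟨x, hx, ?_⟩
  calc dist y x ≤ (1/2:ℝ)^N := dist_le_pow g (fun i hi => hy i (by omega))
    _ < δ := hN

variable {U : Set (XS g)} [CompactSpace ↥U]

/-- Each element of the closure of the holonomy group acts by coordinatewise
translations. -/
theorem coordinate_action {k : ↥U ≃ₜ ↥U}
    (hk : k ∈ closure ((holonomyGroup (Phi g) U : Set (↥U ≃ₜ ↥U)))) (n : ℕ) :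
    ∃ h : HeisM (ZMod (g n)), ∀ x : ↥U, ((k x : XS g) n) = h • ((x : XS g) n) := by
  obtain ⟨m, hm, hdist⟩ := Metric.mem_closure_iff.mp hk ((1/2:ℝ)^(n+1)) (by positivity)
  obtain ⟨⟨γ, hγ⟩, rfl⟩ := hm
  refine ⟨rho (g n) γ, fun x => ?_⟩
  have h1 : dist (k x) (holonomyHom (Phi g) U ⟨γ, hγ⟩ x) < (1/2:ℝ)^(n+1) :=
    lt_of_le_of_lt (Homeomorph.dist_apply_le _ _ x) hdist
  rw [Subtype.dist_eq] at h1
  have h2 : ((k x : XS g)) n = ((holonomyHom (Phi g) U ⟨γ, hγ⟩ x : XS g)) n :=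
    apply_eq_of_dist_lt' g h1 (by omega)
  rw [h2]
  rfl

/-- Any prime torsion in the closure of the holonomy group shows up in the sequence. -/
theorem torsion_prime {k : ↥U ≃ₜ ↥U}
    (hk : k ∈ closure ((holonomyGroup (Phi g) U : Set (↥U ≃ₜ ↥U)))) {q : ℕ}
    (hq : q.Prime) (hpow : k ^ q = 1) (hne : k ≠ 1) : ∃ n, q = g n := by
  -- find a moved coordinate
  have hx : ∃ x : ↥U, k x ≠ x := by
    by_contra hfix
    push_neg at hfix
    exact hne (Homeomorph.ext hfix)
  obtain ⟨x, hxne⟩ := hx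
  have hcne : (k x : XS g) ≠ (x : XS g) := fun hc => hxne (Subtype.ext hc)
  obtain ⟨n₀, hn₀⟩ := Function.ne_iff.mp hcne
  obtain ⟨h, hact⟩ := coordinate_action g hk n₀
  set xb : Yq (ZMod (g n₀)) := (x : XS g) n₀ with hxb
  have hmove : h • xb ≠ xb := by rw [← hact x]; exact hn₀
  -- powers act by powers
  have hiter : ∀ j : ℕ, (((k ^ j) x : XS g)) n₀ = h ^ j • xb := by
    intro j
    induction j with
    | zero => simp [hxb]
    | succ j ih =>
      rw [pow_succ', pow_succ']
      have : ((k * k ^ j) x : XS g) n₀ = h • (((k ^ j) x : XS g) n₀) := by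
        show ((k ((k ^ j) x) : XS g)) n₀ = _
        rw [hact ((k ^ j) x)]
      rw [this, ih, mul_smul]
  have hqfix : h ^ q • xb = xb := by
    have := hiter q
    rw [hpow] at this
    simpa using this.symm
  -- stabilizer argument
  set S := MulAction.stabilizer (HeisM (ZMod (g n₀))) xb with hS
  have hq_mem : h ^ q ∈ S := hqfix
  have hord : h ^ orderOf h ∈ S := by rw [pow_orderOf_eq_one]; exact S.one_mem
  have hdvd : q ∣ orderOf h := by
    by_contra hndvd
    have hcop : Nat.Coprime q (orderOf h) := (Nat.Prime.coprime_iff_not_dvd hq).mpr hndvd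
    have hbez : (1 : ℤ) = q * Nat.gcdA q (orderOf h) + orderOf h * Nat.gcdB q (orderOf h) := by
      have := Nat.gcd_eq_gcd_ab q (orderOf h)
      rwa [hcop.gcd_eq_one, Nat.cast_one] at this
    have hmem : h ∈ S := by
      have hrw : h = (h ^ (q : ℤ)) ^ Nat.gcdA q (orderOf h) *
          (h ^ (orderOf h : ℤ)) ^ Nat.gcdB q (orderOf h) := by
        rw [← zpow_mul, ← zpow_mul, ← zpow_add, ← hbez, zpow_one]
      have hq_mem' : h ^ (q : ℤ) ∈ S := by rw [zpow_natCast]; exact hq_mem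
      have hord' : h ^ (orderOf h : ℤ) ∈ S := by rw [zpow_natCast]; exact hord
      rw [hrw]
      exact S.mul_mem (S.zpow_mem hq_mem' _) (S.zpow_mem hord' _)
    exact hmove hmem
  -- q divides (g n₀)^3
  have hcard : Nat.card (HeisM (ZMod (g n₀))) = (g n₀) ^ 3 := by
    rw [HeisM.natCard, Nat.card_zmod]
  have : q ∣ (g n₀) ^ 3 := by
    rw [← hcard]
    exact hdvd.trans (orderOf_dvd_natCard h)
  exact ⟨n₀, (Nat.prime_dvd_prime_iff_eq hq (PrimeSeq.prime (g := g) n₀)).mp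
    (hq.dvd_of_dvd_pow this)⟩

end HeisFam
namespace HeisFam

open HeisM PiNat

variable (g : ℕ → ℕ) [PrimeSeq g]

theorem prodHomeo_one : prodHomeo g 1 = 1 := by
  apply Homeomorph.ext
  intro x
  funext n
  show (1 : HeisM (ZMod (g n))) • x n = x n
  simp

theorem prodHomeo_mul (h₁ h₂ : ∀ n, HeisM (ZMod (g n))) :
    prodHomeo g (h₁ * h₂) = prodHomeo g h₁ * prodHomeo g h₂ := by
  apply Homeomorph.ext
  intro x
  funext n
  show (h₁ n * h₂ n) • x n = h₁ n • (h₂ n • x n)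
  rw [mul_smul]

theorem prodHomeo_pow (h : ∀ n, HeisM (ZMod (g n))) (j : ℕ) :
    prodHomeo g h ^ j = prodHomeo g (h ^ j) := by
  induction j with
  | zero => rw [pow_zero, pow_zero, prodHomeo_one]
  | succ j ih => rw [pow_succ, pow_succ, prodHomeo_mul, ih]

theorem sigma_pow_eq_one (n₀ : ℕ) : (sigma g n₀) ^ (g n₀) = 1 := by
  rw [sigma, prodHomeo_pow]
  have : (delta g n₀) ^ (g n₀) = 1 := by
    funext n
    show (delta g n₀ n) ^ (g n₀) = 1
    by_cases hn : n = n₀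
    · subst hn
      rw [delta, if_pos rfl, HeisM.aPow]
      have : (g n) • (1 : ZMod (g n)) = 0 := by
        rw [nsmul_eq_mul, mul_one, ZMod.natCast_self]
      rw [this]
      rfl
    · rw [delta, if_neg hn, one_pow]
  rw [this, prodHomeo_one]

theorem sigma_symm_apply_ne (n₀ n : ℕ) (hn : n ≠ n₀) (x : XS g) :
    (sigma g n₀).symm x n = x n := by
  show (delta g n₀ n)⁻¹ • x n = x n
  rw [delta, if_neg hn, inv_one, one_smul]

/-- Construction of prime torsion elements in the holonomy closure. -/
theorem exists_torsion (hinj : Function.Injective g) {U : Set (XS g)} [CompactSpace ↥U]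
    (hne : U.Nonempty) {N : ℕ}
    (hdepth : ∀ x ∈ U, ∀ y : XS g, (∀ i ≤ N, y i = x i) → y ∈ U)
    (n₀ : ℕ) (hn₀ : N < n₀) :
    ∃ k : ↥U ≃ₜ ↥U, k ∈ closure ((holonomyGroup (Phi g) U : Set (↥U ≃ₜ ↥U))) ∧
      k ^ (g n₀) = 1 ∧ k ≠ 1 := by
  have hσU : (sigma g n₀) '' U = U := by
    apply Set.Subset.antisymm
    · rintro - ⟨x, hx, rfl⟩
      exact hdepth x hx _ (fun i hi => sigma_apply_ne g n₀ i (by omega) x)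
    · intro x hx
      refine ⟨(sigma g n₀).symm x, ?_, (sigma g n₀).apply_symm_apply x⟩
      exact hdepth x hx _ (fun i hi => sigma_symm_apply_ne g n₀ i (by omega) x)
  set k : ↥U ≃ₜ ↥U := restrictHomeo (sigma g n₀) hσU with hk
  have hcoe : ∀ (j : ℕ) (x : ↥U), (((k ^ j) x : XS g)) = ((sigma g n₀) ^ j) (x : XS g) := by
    intro j
    induction j with
    | zero => intro x; simp
    | succ j ih =>
      intro x
      rw [pow_succ', pow_succ']
      show ((k ((k ^ j) x) : XS g)) = _
      rw [restrictHomeo_coe, ih x]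
      rfl
  refine ⟨k, ?_, ?_, ?_⟩
  · -- closure membership
    rw [Metric.mem_closure_iff]
    intro ε hε
    obtain ⟨K, hK⟩ : ∃ K : ℕ, (1 / 2 : ℝ) ^ K < ε :=
      exists_pow_lt_of_lt_one hε (by norm_num)
    set K' : ℕ := max K n₀ with hK'
    obtain ⟨γ, hγ⟩ := exists_gamma g hinj (K' + 1) (delta g n₀)
    have hrho1 : ∀ i, i ≤ K' → i ≠ n₀ → rho (g i) γ = 1 := by
      intro i hi hin
      rw [hγ i (by omega), delta, if_neg hin]
    have hrhon₀ : rho (g n₀) γ = ⟨1,0,0⟩ := by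
      rw [hγ n₀ (by omega), delta, if_pos rfl]
    have hstabsub : ∀ x ∈ U, Phi g γ x ∈ U := by
      intro x hx
      apply hdepth x hx
      intro i hi
      rw [Phi_apply, hrho1 i (by omega) (by omega), one_smul]
    have hstabsub' : ∀ x ∈ U, Phi g γ⁻¹ x ∈ U := by
      intro x hx
      apply hdepth x hx
      intro i hi
      rw [Phi_apply, map_inv, hrho1 i (by omega) (by omega), inv_one, one_smul]
    have hstab : γ ∈ adaptedStabilizer (Phi g) U := by
      show (Phi g γ) '' U = U
      apply Set.Subset.antisymm
      · rintro - ⟨x, hx, rfl⟩; exact hstabsub x hx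
      · intro x hx
        refine ⟨Phi g γ⁻¹ x, hstabsub' x hx, ?_⟩
        rw [map_inv]
        exact (Phi g γ).apply_symm_apply x
    set m : ↥U ≃ₜ ↥U := holonomyHom (Phi g) U ⟨γ, hstab⟩ with hm
    refine ⟨m, ⟨⟨γ, hstab⟩, rfl⟩, ?_⟩
    have hptw : ∀ x : ↥U, dist (k x) (m x) ≤ (1/2:ℝ)^(K'+1) := by
      intro x
      rw [Subtype.dist_eq]
      apply dist_le_pow
      intro i hi
      show ((k x : XS g)) i = ((Phi g γ) (x : XS g)) i
      rw [hk, restrictHomeo_coe]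
      rcases eq_or_ne i n₀ with rfl | hin
      · rw [Phi_apply, hrhon₀, sigma_apply_self]
      · rw [Phi_apply, hrho1 i (by omega) hin, one_smul]
        exact sigma_apply_ne g n₀ i hin _
    have : dist k m ≤ (1/2:ℝ)^(K'+1) := by
      rw [Homeomorph.dist_eq_contMap, ContinuousMap.dist_le (by positivity)]
      exact hptw
    rw [dist_comm]
    calc dist m k = dist k m := dist_comm m k
      _ ≤ (1/2:ℝ)^(K'+1) := this
      _ ≤ (1/2:ℝ)^K := by
          apply pow_le_pow_of_le_one (by norm_num) (by norm_num)
          omega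
      _ < ε := hK
  · -- torsion
    apply Homeomorph.ext
    intro x
    apply Subtype.ext
    rw [hcoe (g n₀) x, sigma_pow_eq_one]
    rfl
  · -- nontrivial
    obtain ⟨x, hx⟩ := hne
    haveI : Nontrivial (ZMod (g n₀)) := ZMod.nontrivial _
    set y : XS g := Function.update x n₀ (cls (⟨0,1,0⟩ : HeisM (ZMod (g n₀)))) with hy
    have hyU : y ∈ U := hdepth x hx y (fun i hi => Function.update_of_ne (by omega) _ _)
    intro hone
    have hcy : ((k ⟨y, hyU⟩ : ↥U) : XS g) = y := by
      rw [hone]; rfl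
    rw [hk] at hcy
    have : (sigma g n₀) y = y := by
      rw [← restrictHomeo_coe (sigma g n₀) hσU ⟨y, hyU⟩]
      exact hcy
    have hcoord := congrFun this n₀
    rw [sigma_apply_self] at hcoord
    rw [hy, Function.update_self] at hcoord
    exact aGen_moves hcoord

end HeisFam
/-! ### Conjugation of homeomorphism groups -/

section Conj

variable {Z₁ Z₂ : Type*} [MetricSpace Z₁] [CompactSpace Z₁] [MetricSpace Z₂] [CompactSpace Z₂]

/-- Conjugation by a homeomorphism, as a group homomorphism between homeomorphism groups. -/
def conjHom (h : Z₁ ≃ₜ Z₂) : (Z₁ ≃ₜ Z₁) →* (Z₂ ≃ₜ Z₂) where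
  toFun k := h.symm.trans (k.trans h)
  map_one' := Homeomorph.ext fun x => by
    show h ((1 : Z₁ ≃ₜ Z₁) (h.symm x)) = x
    rw [Homeomorph.one_apply', Homeomorph.apply_symm_apply]
  map_mul' k₁ k₂ := Homeomorph.ext fun x => by
    show h ((k₁ * k₂) (h.symm x)) = h (k₁ (h.symm (h (k₂ (h.symm x)))))
    rw [Homeomorph.mul_apply', Homeomorph.symm_apply_apply]

theorem conjHom_apply (h : Z₁ ≃ₜ Z₂) (k : Z₁ ≃ₜ Z₁) (x : Z₂) :
    conjHom h k x = h (k (h.symm x)) := rfl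

theorem conjHom_injective (h : Z₁ ≃ₜ Z₂) : Function.Injective (conjHom h) := by
  intro k k' he
  apply Homeomorph.ext
  intro x
  have := DFunLike.congr_fun he (h x)
  rw [conjHom_apply, conjHom_apply, Homeomorph.symm_apply_apply] at this
  exact h.injective this

theorem conjHom_continuous (h : Z₁ ≃ₜ Z₂) : Continuous (conjHom h) := by
  rw [Metric.continuous_iff]
  intro k₀ ε hε
  obtain ⟨δ, hδ, H⟩ := Metric.uniformContinuous_iff.mp
    (CompactSpace.uniformContinuous_of_continuous h.continuous) ε hε
  refine ⟨δ, hδ, fun k hk => ?_⟩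
  rw [Homeomorph.dist_lt_iff' _ _ hε]
  intro y
  rw [conjHom_apply, conjHom_apply]
  apply H
  exact lt_of_le_of_lt (Homeomorph.dist_apply_le k k₀ (h.symm y)) hk

end Conj

namespace HeisFam

open HeisM PiNat

/-- The key invariance: if two of our actions are return equivalent, then all sufficiently
late primes of the second sequence occur in the first sequence. -/
theorem re_key {g₁ g₂ : ℕ → ℕ} [PrimeSeq g₁] [PrimeSeq g₂]
    (hinj₁ : Function.Injective g₁) (hinj₂ : Function.Injective g₂)
    (hre : ReturnEquivalent (Phi g₁) (Phi g₂)) :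
    ∃ N : ℕ, ∀ n, N < n → ∃ m, g₂ n = g₁ m := by
  obtain ⟨U₁, U₂, ⟨hne₁, hcl₁, -⟩, ⟨hne₂, hcl₂, -⟩, h, θ, hθ⟩ := hre
  haveI : CompactSpace ↥U₁ := isCompact_iff_compactSpace.mp hcl₁.1.isCompact
  haveI : CompactSpace ↥U₂ := isCompact_iff_compactSpace.mp hcl₂.1.isCompact
  obtain ⟨N₂, hdepth⟩ := exists_depth g₂ hcl₂
  refine ⟨N₂, fun n hn => ?_⟩
  obtain ⟨k₂, hk₂cl, hk₂pow, hk₂ne⟩ := exists_torsion g₂ hinj₂ hne₂ hdepth n hn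
  set G := conjHom h.symm with hG
  have hGH : ∀ m : ↥U₂ ≃ₜ ↥U₂, m ∈ (holonomyGroup (Phi g₂) U₂ : Set (↥U₂ ≃ₜ ↥U₂)) →
      G m ∈ (holonomyGroup (Phi g₁) U₁ : Set (↥U₁ ≃ₜ ↥U₁)) := by
    intro m hm
    set c := θ.symm ⟨m, hm⟩ with hc
    have h1 : ((θ c : holonomyGroup (Phi g₂) U₂) : ↥U₂ ≃ₜ ↥U₂) = m := by
      rw [hc, MulEquiv.apply_symm_apply]
    have h2 : m = h.symm.trans (((c : ↥U₁ ≃ₜ ↥U₁)).trans h) := by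
      rw [← h1]; exact hθ c
    have h3 : G m = (c : ↥U₁ ≃ₜ ↥U₁) := by
      apply Homeomorph.ext
      intro x
      rw [hG, conjHom_apply, h2]
      show h.symm (h ((c : ↥U₁ ≃ₜ ↥U₁) (h.symm (h.symm.symm x)))) = _
      rw [Homeomorph.symm_apply_apply, Homeomorph.symm_symm, Homeomorph.symm_apply_apply]
    rw [h3]
    exact c.2
  have hGcl : G k₂ ∈ closure ((holonomyGroup (Phi g₁) U₁ : Set (↥U₁ ≃ₜ ↥U₁))) := by
    have h4 : G k₂ ∈ G '' closure ((holonomyGroup (Phi g₂) U₂ : Set (↥U₂ ≃ₜ ↥U₂))) :=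
      Set.mem_image_of_mem _ hk₂cl
    have h5 := image_closure_subset_closure_image (f := (G : (↥U₂ ≃ₜ ↥U₂) → (↥U₁ ≃ₜ ↥U₁)))
      (s := (holonomyGroup (Phi g₂) U₂ : Set (↥U₂ ≃ₜ ↥U₂))) (conjHom_continuous h.symm)
    have h6 := closure_mono (Set.image_subset_iff.mpr (fun m hm => hGH m hm))
    exact h6 (h5 h4)
  have hpow : (G k₂) ^ (g₂ n) = 1 := by
    rw [← map_pow, hk₂pow, map_one]
  have hne : G k₂ ≠ 1 := by
    intro h0
    apply hk₂ne
    apply conjHom_injective h.symm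
    rw [h0, map_one]
  exact (torsion_prime g₁ hGcl (PrimeSeq.prime (g := g₂) n) hpow hne).imp
    (fun m hm => hm)

end HeisFam
/-! ### The uncountable family -/

namespace HeisFam

open HeisM PiNat

/-- Encoding of boolean prefixes. -/
def enc (r : ℕ → Bool) (n : ℕ) : ℕ := Encodable.encode (List.map r (List.range n))

theorem enc_cross {r₁ r₂ : ℕ → Bool} {m n : ℕ} (h : enc r₁ m = enc r₂ n) :
    m = n ∧ ∀ i < n, r₁ i = r₂ i := by
  have hl : List.map r₁ (List.range m) = List.map r₂ (List.range n) :=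
    Encodable.encode_injective h
  have hmn : m = n := by
    have := congrArg List.length hl
    simpa using this
  subst hmn
  refine ⟨rfl, fun i hi => ?_⟩
  have h3 : (List.map r₁ (List.range m))[i]? = (List.map r₂ (List.range m))[i]? := by rw [hl]
  simp [List.getElem?_map, List.getElem?_range, hi] at h3
  exact h3

/-- The sequence of primes attached to `r : ℕ → Bool`. -/
def gseq (r : ℕ → Bool) (n : ℕ) : ℕ := Nat.nth Nat.Prime (enc r n)

instance (r : ℕ → Bool) : PrimeSeq (gseq r) := ⟨fun n => Nat.prime_nth_prime _⟩

theorem gseq_inj (r : ℕ → Bool) : Function.Injective (gseq r) := by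
  intro m n h
  exact (enc_cross (Nat.nth_injective Nat.infinite_setOf_prime h)).1

theorem gseq_cross {r₁ r₂ : ℕ → Bool} {m n : ℕ} (h : gseq r₁ m = gseq r₂ n) :
    m = n ∧ ∀ i < n, r₁ i = r₂ i :=
  enc_cross (Nat.nth_injective Nat.infinite_setOf_prime h)

/-- The members of the family are pairwise non return equivalent. -/
theorem not_RE {r₁ r₂ : ℕ → Bool} (hr : r₁ ≠ r₂) :
    ¬ ReturnEquivalent (Phi (gseq r₁)) (Phi (gseq r₂)) := by
  intro hre
  obtain ⟨N, hN⟩ := re_key (gseq_inj r₁) (gseq_inj r₂) hre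
  apply hr
  funext i
  obtain ⟨m, hm⟩ := hN (max (N + 1) (i + 1)) (by omega)
  obtain ⟨hmn, hag⟩ := gseq_cross hm
  exact (hag i (by omega)).symm

/-- The bundled Cantor action attached to `r`. -/
noncomputable def mkAction (r : ℕ → Bool) : HeisenbergCantorAction where
  X := XS (gseq r)
  perf := perfect_univ (gseq r)
  act := Phi (gseq r)
  minimal := minimal_Phi (gseq r) (gseq_inj r)
  equicontinuous := equicontinuous_Phi (gseq r)

theorem re_refl {X : Type*} [MetricSpace X] [Nonempty X] {Γ : Type*} [Group Γ]
    (Φ : Γ →* (X ≃ₜ X)) : ReturnEquivalent Φ Φ := by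
  have had : IsAdaptedSet Φ Set.univ := by
    refine ⟨Set.univ_nonempty, isClopen_univ, fun g _ => ?_⟩
    rw [Set.image_univ]
    exact (Φ g).surjective.range_eq
  refine ⟨Set.univ, Set.univ, had, had, Homeomorph.refl _, MulEquiv.refl _, fun k => ?_⟩
  apply Homeomorph.ext
  intro x
  rfl

theorem mkAction_injective : Function.Injective mkAction := by
  intro r₁ r₂ he
  by_contra hne
  refine not_RE hne ?_
  have h2 : ReturnEquivalent (Phi (gseq r₁)) (Phi (gseq r₁)) := re_refl _
  have h1 := congrArg (fun B : HeisenbergCantorAction =>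
    @ReturnEquivalent _ (mkAction r₁).ms Heisenberg _ _ B.ms Heisenberg _
      (mkAction r₁).act B.act) he
  exact Eq.mp h1 h2

theorem uncountable_funBool : ¬ Countable (ℕ → Bool) := by
  intro hc
  obtain ⟨f, hf⟩ := countable_iff_exists_injective (ℕ → Bool) |>.mp hc
  set d : ℕ → Bool := fun n => ! (Function.invFun f n n) with hd
  have hinv : Function.invFun f (f d) = d := Function.leftInverse_invFun hf d
  have hcontra : d (f d) = ! d (f d) := by
    conv_lhs => rw [hd]
    show (! (Function.invFun f (f d) (f d))) = _
    rw [hinv]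
  simp at hcontra

end HeisFam

/-- There is an uncountable family of minimal equicontinuous Cantor
actions of the integer Heisenberg group, each topologically free and wild, no two distinct
members of which are return equivalent. -/
theorem exists_uncountable_family_of_wild_topFree_heisenberg_actions :
    ∃ A : Set HeisenbergCantorAction, ¬ A.Countable ∧
      (∀ B ∈ A, IsTopologicallyFree B.act ∧ ¬ IsStableAction B.act) ∧
      (∀ B₁ ∈ A, ∀ B₂ ∈ A, B₁ ≠ B₂ → ¬ ReturnEquivalent B₁.act B₂.act) := by
  refine ⟨Set.range HeisFam.mkAction, ?_, ?_, ?_⟩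
  · intro hc
    apply HeisFam.uncountable_funBool
    haveI := hc.to_subtype
    exact Function.Injective.countable
      (f := fun r => (⟨HeisFam.mkAction r, Set.mem_range_self r⟩ :
        ↥(Set.range HeisFam.mkAction)))
      (fun a b hab => HeisFam.mkAction_injective (Subtype.ext_iff.mp hab))
  · rintro B ⟨r, rfl⟩
    exact ⟨HeisFam.topFree_Phi (HeisFam.gseq r) (HeisFam.gseq_inj r),
      HeisFam.wild_Phi (HeisFam.gseq r) (HeisFam.gseq_inj r)⟩
  · rintro B₁ ⟨r₁, rfl⟩ B₂ ⟨r₂, rfl⟩ hne hre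
    have hr : r₁ ≠ r₂ := fun h => hne (congrArg HeisFam.mkAction h)
    exact HeisFam.not_RE hr hre
end
end

section
/- Let (X, Γ, Φ) be a minimal equicontinuous Cantor action, x ∈ X, and { U_ℓ : ℓ ≥ 0 } an adapted neighborhood basis at x with stabilizers Γ_ℓ and normal cores C_ℓ = ⋂_{g ∈ Γ} g Γ_ℓ g⁻¹. Suppose the group chain { Γ_ℓ } is in normal form, i.e. for every ℓ the projection from the inverse limit D_∞ = lim← Γ_ℓ/C_ℓ to Γ_ℓ/C_ℓ is surjective. Then Π[D(Φ,x)] = LCM{ [Γ_ℓ : C_ℓ] : ℓ ≥ 0 }. -/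
noncomputable section

open Set Topology

/-! ### Group chains and their inverse limits -/

section GroupChains

variable {Γ : Type*} [Group Γ]

/-- The finite quotient `Γ_ℓ / C_ℓ` of an element of a group chain by its normal core. -/
def chainQuot (Γs : ℕ → Subgroup Γ) (ℓ : ℕ) : Type _ :=
  ↥(Γs ℓ) ⧸ ((Γs ℓ).normalCore.subgroupOf (Γs ℓ))

instance (Γs : ℕ → Subgroup Γ) (ℓ : ℕ) : Group (chainQuot Γs ℓ) :=
  inferInstanceAs (Group (↥(Γs ℓ) ⧸ ((Γs ℓ).normalCore.subgroupOf (Γs ℓ))))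

/-- The bonding homomorphism `Γ_{ℓ+1}/C_{ℓ+1} → Γ_ℓ/C_ℓ` induced by the inclusion
`Γ_{ℓ+1} ⊆ Γ_ℓ`. -/
def chainBond (Γs : ℕ → Subgroup Γ) (hle : ∀ ℓ, Γs (ℓ + 1) ≤ Γs ℓ) (ℓ : ℕ) :
    chainQuot Γs (ℓ + 1) →* chainQuot Γs ℓ :=
  QuotientGroup.map _ _ (Subgroup.inclusion (hle ℓ)) (by
    intro g hg
    simp only [Subgroup.mem_comap, Subgroup.mem_subgroupOf] at hg ⊢
    exact Subgroup.normalCore_mono (hle ℓ) hg)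

/-- The inverse limit `D_∞ = lim← Γ_ℓ/C_ℓ`, as the subgroup of the product consisting of
the sequences compatible with the bonding maps. -/
def chainDinf (Γs : ℕ → Subgroup Γ) (hle : ∀ ℓ, Γs (ℓ + 1) ≤ Γs ℓ) :
    Subgroup (∀ ℓ, chainQuot Γs ℓ) where
  carrier := { z | ∀ ℓ, chainBond Γs hle ℓ (z (ℓ + 1)) = z ℓ }
  one_mem' := fun ℓ => by simp only [Pi.one_apply, map_one]
  mul_mem' := by
    intro a b ha hb ℓ
    simp only [Pi.mul_apply, map_mul, ha ℓ, hb ℓ]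
  inv_mem' := by
    intro a ha ℓ
    simp only [Pi.inv_apply, map_inv, ha ℓ]

end GroupChains

/-- The stabilizer subgroups of a nested pair of adapted sets are nested. -/
theorem adaptedStabilizer_mono {X : Type*} [MetricSpace X] {Γ : Type*} [Group Γ]
    (Φ : Γ →* (X ≃ₜ X)) {U V : Set X} (hVU : V ⊆ U)
    (hU : IsAdaptedSet Φ U) (hV : IsAdaptedSet Φ V) :
    adaptedStabilizer Φ V ≤ adaptedStabilizer Φ U := by
  intro g hg
  have hgV : (Φ g) '' V = V := hg
  have hne : ((Φ g) '' U ∩ U).Nonempty := by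
    obtain ⟨v, hv⟩ := hV.1
    refine ⟨v, ?_, hVU hv⟩
    have hv' : v ∈ (Φ g) '' V := by rw [hgV]; exact hv
    exact Set.image_mono (f := ⇑(Φ g)) hVU hv'
  exact hU.2.2 g hne

/-! ### Auxiliary development for Statement 14 -/

namespace SODisc

set_option linter.unusedSectionVars false

open Metric Set

variable {X : Type*} [MetricSpace X] [CompactSpace X]
variable {Γ : Type*} [Group Γ]

theorem phi_mul_apply (Φ : Γ →* (X ≃ₜ X)) (a b : Γ) (y : X) :
    Φ (a * b) y = Φ a (Φ b y) := by rw [map_mul]; rfl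

theorem phi_one_apply (Φ : Γ →* (X ≃ₜ X)) (y : X) : Φ (1 : Γ) y = y := by
  rw [map_one]; rfl

theorem dist_le_of_forall {f g : X ≃ₜ X} {C : ℝ} (h0 : 0 ≤ C)
    (h : ∀ y, dist (f y) (g y) ≤ C) : dist f g ≤ C := by
  rw [Homeomorph.dist_eq_contMap]
  exact (ContinuousMap.dist_le h0).mpr h

/-- Two points lie in the same translate ("block") of the adapted set `V`. -/
def sameBlock (Φ : Γ →* (X ≃ₜ X)) (V : Set X) (y z : X) : Prop :=
  ∃ g : Γ, Φ g y ∈ V ∧ Φ g z ∈ V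

variable {Φ : Γ →* (X ≃ₜ X)} {V : Set X}

theorem adapted_stay (hV : IsAdaptedSet Φ V) {w : Γ} {a : X}
    (ha : a ∈ V) (hwa : Φ w a ∈ V) {b : X} (hb : b ∈ V) : Φ w b ∈ V := by
  have himg : Φ w '' V = V := hV.2.2 w ⟨Φ w a, Set.mem_image_of_mem _ ha, hwa⟩
  rw [← himg]
  exact Set.mem_image_of_mem _ hb

theorem adapted_mem_stab (hV : IsAdaptedSet Φ V) {g : Γ} {a : X}
    (ha : a ∈ V) (hga : Φ g a ∈ V) : g ∈ adaptedStabilizer Φ V :=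
  hV.2.2 g ⟨Φ g a, Set.mem_image_of_mem _ ha, hga⟩

theorem sameBlock.mem_of (hV : IsAdaptedSet Φ V) {y z : X}
    (h : sameBlock Φ V y z) {k : Γ} (hk : Φ k y ∈ V) : Φ k z ∈ V := by
  obtain ⟨g, hgy, hgz⟩ := h
  have h1 : Φ (k * g⁻¹) (Φ g y) ∈ V := by
    rw [← phi_mul_apply, inv_mul_cancel_right]; exact hk
  have h2 := adapted_stay hV hgy h1 hgz
  rwa [← phi_mul_apply, inv_mul_cancel_right] at h2

theorem sameBlock_refl (hmin : IsMinimalAction Φ) (hV : IsAdaptedSet Φ V)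
    (y : X) : sameBlock Φ V y y := by
  obtain ⟨v, hvr, hvV⟩ := (hmin y).exists_mem_open hV.2.1.2 hV.1
  obtain ⟨g, rfl⟩ := hvr
  exact ⟨g, hvV, hvV⟩

theorem sameBlock.symm' {y z : X} (h : sameBlock Φ V y z) : sameBlock Φ V z y := by
  obtain ⟨g, h1, h2⟩ := h; exact ⟨g, h2, h1⟩

theorem sameBlock.trans' (hV : IsAdaptedSet Φ V) {y z w : X}
    (h1 : sameBlock Φ V y z) (h2 : sameBlock Φ V z w) : sameBlock Φ V y w := by
  obtain ⟨g, hy, hz⟩ := h1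
  exact ⟨g, hy, h2.mem_of hV hz⟩

theorem sameBlock.smul {y z : X} (h : sameBlock Φ V y z) (g : Γ) :
    sameBlock Φ V (Φ g y) (Φ g z) := by
  obtain ⟨k, h1, h2⟩ := h
  refine ⟨k * g⁻¹, ?_, ?_⟩ <;> rw [← phi_mul_apply, inv_mul_cancel_right] <;> assumption

theorem sameBlock_of_mem {y z : X} (hy : y ∈ V) (hz : z ∈ V) : sameBlock Φ V y z :=
  ⟨1, by rw [phi_one_apply]; exact hy, by rw [phi_one_apply]; exact hz⟩

variable (Φ V)

/-- The setoid of blocks. -/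
def blockSetoid (hmin : IsMinimalAction Φ) (hV : IsAdaptedSet Φ V) : Setoid X :=
  ⟨sameBlock Φ V,
    ⟨sameBlock_refl hmin hV, fun h => h.symm', fun h1 h2 => h1.trans' hV h2⟩⟩

variable (hmin : IsMinimalAction Φ) (hV : IsAdaptedSet Φ V)

include hmin hV

/-- The finite set of blocks (translates of the adapted set `V`). -/
def Blocks : Type _ := Quotient (blockSetoid Φ V hmin hV)

/-- Projection of a point to its block. -/
def toBlock (y : X) : Blocks Φ V hmin hV := Quotient.mk _ y

theorem toBlock_eq_iff {y z : X} :
    toBlock Φ V hmin hV y = toBlock Φ V hmin hV z ↔ sameBlock Φ V y z :=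
  ⟨fun h => Quotient.exact h, fun h => Quotient.sound h⟩

theorem isOpen_sameBlock (w : X) : IsOpen {y | sameBlock Φ V y w} := by
  have h : {y | sameBlock Φ V y w} = ⋃ g : Γ, ⋃ _ : Φ g w ∈ V, (fun y => Φ g y) ⁻¹' V := by
    ext y
    simp only [Set.mem_setOf_eq, Set.mem_iUnion, Set.mem_preimage]
    exact ⟨fun ⟨g, h1, h2⟩ => ⟨g, h2, h1⟩, fun ⟨g, h2, h1⟩ => ⟨g, h1, h2⟩⟩
  rw [h]
  exact isOpen_iUnion fun g => isOpen_iUnion fun _ => hV.2.1.2.preimage (Φ g).continuous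

theorem isOpen_block_fiber (b : Blocks Φ V hmin hV) :
    IsOpen (toBlock Φ V hmin hV ⁻¹' {b}) := by
  induction b using Quotient.ind with
  | _ w =>
    have h : toBlock Φ V hmin hV ⁻¹' {Quotient.mk _ w} = {y | sameBlock Φ V y w} := by
      ext y
      simp only [Set.mem_preimage, Set.mem_singleton_iff, Set.mem_setOf_eq]
      exact toBlock_eq_iff Φ V hmin hV
    have := isOpen_sameBlock Φ V hmin hV w
    rwa [← h] at this

theorem blocks_cover :
    (Set.univ : Set X) ⊆ ⋃ b, toBlock Φ V hmin hV ⁻¹' {b} :=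
  fun y _ => Set.mem_iUnion.2 ⟨toBlock Φ V hmin hV y, rfl⟩

theorem finite_blocks : Finite (Blocks Φ V hmin hV) := by
  obtain ⟨t, ht⟩ := isCompact_univ.elim_finite_subcover _
    (isOpen_block_fiber Φ V hmin hV) (blocks_cover Φ V hmin hV)
  have hmem : ∀ b, b ∈ t := by
    intro b
    induction b using Quotient.ind with
    | _ w =>
      have hw := ht (Set.mem_univ w)
      simp only [Set.mem_iUnion, Set.mem_preimage, Set.mem_singleton_iff] at hw
      obtain ⟨s, hst, hws⟩ := hw
      have : toBlock Φ V hmin hV w = s := hws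
      rw [show (Quotient.mk _ w : Blocks Φ V hmin hV) = s from this]
      exact hst
  exact Finite.of_injective (fun b => (⟨b, hmem b⟩ : {b // b ∈ t}))
    fun a b hab => congrArg Subtype.val hab

theorem exists_sep : ∃ δ > 0, ∀ y z : X, dist y z < δ → sameBlock Φ V y z := by
  obtain ⟨δ, δpos, hδ⟩ := lebesgue_number_lemma_of_metric isCompact_univ
    (isOpen_block_fiber Φ V hmin hV) (blocks_cover Φ V hmin hV)
  refine ⟨δ, δpos, fun y z hd => ?_⟩
  obtain ⟨b, hb⟩ := hδ y (Set.mem_univ y)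
  have hy : toBlock Φ V hmin hV y = b := hb (mem_ball_self δpos)
  have hz : toBlock Φ V hmin hV z = b := hb (by rw [mem_ball, dist_comm]; exact hd)
  exact (toBlock_eq_iff Φ V hmin hV).1 (hy.trans hz.symm)

omit hmin hV in
theorem exists_close {gg : X ≃ₜ X} (hgg : gg ∈ profiniteClosure Φ) {ε : ℝ} (hε : 0 < ε) :
    ∃ g : Γ, dist gg (Φ g) < ε := by
  have h : gg ∈ closure (Φ.range : Set (X ≃ₜ X)) := hgg
  rw [Metric.mem_closure_iff] at h
  obtain ⟨b, hb, hd⟩ := h ε hε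
  rw [SetLike.mem_coe, MonoidHom.mem_range] at hb
  obtain ⟨g, rfl⟩ := hb
  exact ⟨g, hd⟩

theorem closure_sameBlock {gg : X ≃ₜ X} (hgg : gg ∈ profiniteClosure Φ) {y z : X}
    (h : sameBlock Φ V y z) : sameBlock Φ V (gg y) (gg z) := by
  obtain ⟨δ, δpos, hδ⟩ := exists_sep Φ V hmin hV
  obtain ⟨g, hg⟩ := exists_close (Φ := Φ) hgg δpos
  have h1 : sameBlock Φ V (gg y) (Φ g y) :=
    hδ _ _ ((Homeomorph.dist_apply_le gg (Φ g) y).trans_lt hg)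
  have h2 : sameBlock Φ V (gg z) (Φ g z) :=
    hδ _ _ ((Homeomorph.dist_apply_le gg (Φ g) z).trans_lt hg)
  exact (h1.trans' hV ((h.smul g).trans' hV h2.symm'))

/-- The action of an element of the closure `G(Φ)` on the blocks. -/
def blockPermFun (gg : ↥(profiniteClosure Φ)) :
    Blocks Φ V hmin hV → Blocks Φ V hmin hV :=
  Quot.lift (fun y => toBlock Φ V hmin hV ((gg : X ≃ₜ X) y))
    (fun a b h => (toBlock_eq_iff Φ V hmin hV).2 (closure_sameBlock Φ V hmin hV gg.2 h))

theorem blockPermFun_mk (gg : ↥(profiniteClosure Φ)) (y : X) :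
    blockPermFun Φ V hmin hV gg (toBlock Φ V hmin hV y) =
      toBlock Φ V hmin hV ((gg : X ≃ₜ X) y) := rfl

/-- The homomorphism from `G(Φ)` to the permutations of the blocks. -/
def blockHom : ↥(profiniteClosure Φ) →* Equiv.Perm (Blocks Φ V hmin hV) where
  toFun gg :=
    { toFun := blockPermFun Φ V hmin hV gg
      invFun := blockPermFun Φ V hmin hV gg⁻¹
      left_inv := by
        intro b
        induction b using Quotient.ind with
        | _ y =>
          have hval : ((gg⁻¹ : ↥(profiniteClosure Φ)) : X ≃ₜ X) (((gg : ↥(profiniteClosure Φ)) : X ≃ₜ X) y) = y := by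
            simp
          exact congrArg (toBlock Φ V hmin hV) hval
      right_inv := by
        intro b
        induction b using Quotient.ind with
        | _ y =>
          have hval : ((gg : ↥(profiniteClosure Φ)) : X ≃ₜ X) (((gg⁻¹ : ↥(profiniteClosure Φ)) : X ≃ₜ X) y) = y := by
            simp
          exact congrArg (toBlock Φ V hmin hV) hval }
  map_one' := by
    apply Equiv.ext
    intro b
    induction b using Quotient.ind with
    | _ y =>
      have hval : (((1 : ↥(profiniteClosure Φ)) : X ≃ₜ X)) y = y := by simp
      exact congrArg (toBlock Φ V hmin hV) hval
  map_mul' := by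
    intro gg hh
    apply Equiv.ext
    intro b
    induction b using Quotient.ind with
    | _ y =>
      have hval : ((gg * hh : ↥(profiniteClosure Φ)) : X ≃ₜ X) y =
          (gg : X ≃ₜ X) ((hh : X ≃ₜ X) y) := by simp
      exact congrArg (toBlock Φ V hmin hV) hval

theorem blockHom_apply_mk (gg : ↥(profiniteClosure Φ)) (y : X) :
    blockHom Φ V hmin hV gg (toBlock Φ V hmin hV y) =
      toBlock Φ V hmin hV ((gg : X ≃ₜ X) y) := rfl

theorem blockHom_eq_of_close {δ : ℝ}
    (hδ : ∀ y z : X, dist y z < δ → sameBlock Φ V y z)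
    {gg hh : ↥(profiniteClosure Φ)}
    (hd : dist ((gg : X ≃ₜ X)) ((hh : X ≃ₜ X)) < δ) :
    blockHom Φ V hmin hV gg = blockHom Φ V hmin hV hh := by
  apply Equiv.ext
  intro b
  induction b using Quotient.ind with
  | _ y =>
    exact (toBlock_eq_iff Φ V hmin hV).2
      (hδ _ _ ((Homeomorph.dist_apply_le (gg : X ≃ₜ X) (hh : X ≃ₜ X) y).trans_lt hd))

theorem mem_ker_blockHom {gg : ↥(profiniteClosure Φ)} :
    gg ∈ (blockHom Φ V hmin hV).ker ↔ ∀ y : X, sameBlock Φ V ((gg : X ≃ₜ X) y) y := by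
  rw [MonoidHom.mem_ker]
  constructor
  · intro h y
    have h2 := congrArg (fun e : Equiv.Perm (Blocks Φ V hmin hV) =>
      e (toBlock Φ V hmin hV y)) h
    simp only [Equiv.Perm.coe_one, id_eq] at h2
    exact ((toBlock_eq_iff Φ V hmin hV).1 h2)
  · intro h
    apply Equiv.ext
    intro b
    induction b using Quotient.ind with
    | _ y =>
      exact (toBlock_eq_iff Φ V hmin hV).2 (h y)

theorem isOpen_ker_blockHom :
    IsOpen (((blockHom Φ V hmin hV).ker : Subgroup ↥(profiniteClosure Φ)) :
      Set ↥(profiniteClosure Φ)) := by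
  obtain ⟨δ, δpos, hδ⟩ := exists_sep Φ V hmin hV
  rw [Metric.isOpen_iff]
  intro gg hg
  refine ⟨δ, δpos, fun hh hball => ?_⟩
  rw [mem_ball, Subtype.dist_eq] at hball
  have heq : blockHom Φ V hmin hV hh = blockHom Φ V hmin hV gg :=
    blockHom_eq_of_close Φ V hmin hV hδ hball
  rw [SetLike.mem_coe, MonoidHom.mem_ker] at hg ⊢
  rw [heq, hg]

/-- The canonical map `Γ → G(Φ)`. -/
def iota : Γ →* ↥(profiniteClosure Φ) :=
  Φ.codRestrict _ fun g => Φ.range.le_topologicalClosure ⟨g, rfl⟩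

omit hmin hV in
theorem iota_coe (g : Γ) : ((iota Φ g : ↥(profiniteClosure Φ)) : X ≃ₜ X) = Φ g := rfl

/-- The induced homomorphism `Γ → Perm(Blocks)`. -/
def tauHom : Γ →* Equiv.Perm (Blocks Φ V hmin hV) :=
  (blockHom Φ V hmin hV).comp (iota Φ)

theorem tauHom_apply_mk (g : Γ) (y : X) :
    tauHom Φ V hmin hV g (toBlock Φ V hmin hV y) = toBlock Φ V hmin hV (Φ g y) :=
  blockHom_apply_mk Φ V hmin hV (iota Φ g) y

theorem core_sameBlock {g : Γ} (hg : g ∈ (adaptedStabilizer Φ V).normalCore) (y : X) :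
    sameBlock Φ V (Φ g y) y := by
  obtain ⟨k, hky, -⟩ := sameBlock_refl hmin hV y
  refine ⟨k, ?_, hky⟩
  have hs : k * g * k⁻¹ ∈ adaptedStabilizer Φ V := hg k
  have himg : Φ (k * g * k⁻¹) '' V = V := hs
  have hmem : Φ (k * g * k⁻¹) (Φ k y) ∈ V := by
    rw [← himg]; exact Set.mem_image_of_mem _ hky
  rwa [← phi_mul_apply, inv_mul_cancel_right, phi_mul_apply] at hmem

theorem mem_normalCore_of_sameBlock {g : Γ}
    (h : ∀ y : X, sameBlock Φ V (Φ g y) y) :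
    g ∈ (adaptedStabilizer Φ V).normalCore := by
  intro b
  obtain ⟨v, hv⟩ := hV.1
  have h1 : sameBlock Φ V (Φ b⁻¹ v) (Φ g (Φ b⁻¹ v)) := (h (Φ b⁻¹ v)).symm'
  have h2 : Φ b (Φ b⁻¹ v) ∈ V := by
    rw [← phi_mul_apply, mul_inv_cancel, phi_one_apply]; exact hv
  have h3 : Φ b (Φ g (Φ b⁻¹ v)) ∈ V := h1.mem_of hV h2
  have h4 : Φ (b * g * b⁻¹) v ∈ V := by
    rw [phi_mul_apply, phi_mul_apply]; exact h3
  exact adapted_mem_stab hV hv h4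

theorem tauHom_eq_one_of_core {g : Γ}
    (hg : g ∈ (adaptedStabilizer Φ V).normalCore) :
    tauHom Φ V hmin hV g = 1 := by
  apply Equiv.ext
  intro b
  induction b using Quotient.ind with
  | _ y =>
    exact (toBlock_eq_iff Φ V hmin hV).2 (core_sameBlock Φ V hmin hV hg y)

theorem core_of_tauHom_eq_one {g : Γ}
    (h : tauHom Φ V hmin hV g = 1) :
    g ∈ (adaptedStabilizer Φ V).normalCore := by
  apply mem_normalCore_of_sameBlock Φ V hmin hV
  intro y
  have h2 := congrArg (fun e : Equiv.Perm (Blocks Φ V hmin hV) =>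
    e (toBlock Φ V hmin hV y)) h
  simp only [Equiv.Perm.coe_one, id_eq] at h2
  exact (toBlock_eq_iff Φ V hmin hV).1 h2

theorem finite_perm_blocks : Finite (Equiv.Perm (Blocks Φ V hmin hV)) := by
  have := finite_blocks Φ V hmin hV
  infer_instance

end SODisc

namespace SODisc

set_option linter.unusedSectionVars false
set_option maxHeartbeats 1000000

open Metric Set

variable {X : Type*} [MetricSpace X] [CompactSpace X]
variable {Γ : Type*} [Group Γ] {Φ : Γ →* (X ≃ₜ X)}
variable {x : X} {U : ℕ → Set X}

theorem shrink (hadapt : ∀ ℓ, IsAdaptedSet Φ (U ℓ)) (hanti : Antitone U)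
    (hinter : (⋂ ℓ, U ℓ) = {x}) {r : ℝ} (hr : 0 < r) :
    ∃ J, ∀ j, J ≤ j → ∀ a ∈ U j, dist a x < r := by
  by_contra hc
  push_neg at hc
  set F : ℕ → Set X := fun j => U j ∩ {a | r ≤ dist a x} with hF
  have hclosed : ∀ j, IsClosed (F j) := fun j =>
    ((hadapt j).2.1.1).inter
      (isClosed_le continuous_const (Continuous.dist continuous_id continuous_const))
  have hne : ∀ j, (F j).Nonempty := by
    intro j
    obtain ⟨k, hk, a, haU, har⟩ := hc j
    exact ⟨a, hanti hk haU, har⟩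
  have hsub : ∀ j, F (j + 1) ⊆ F j := fun j =>
    Set.inter_subset_inter_left _ (hanti (Nat.le_succ j))
  obtain ⟨a, ha⟩ := IsCompact.nonempty_iInter_of_sequence_nonempty_isCompact_isClosed F hsub hne
    ((hclosed 0).isCompact) hclosed
  have haU : a ∈ ⋂ j, U j := Set.mem_iInter.2 fun j => (Set.mem_iInter.1 ha j).1
  rw [hinter] at haU
  have har : r ≤ dist a x := (Set.mem_iInter.1 ha 0).2
  rw [Set.mem_singleton_iff.1 haU, dist_self] at har
  exact absurd har (not_le.2 hr)

theorem blocks_small (hmin : IsMinimalAction Φ) (heqc : IsEquicontinuousAction Φ)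
    (hadapt : ∀ ℓ, IsAdaptedSet Φ (U ℓ)) (hanti : Antitone U) (hinter : (⋂ ℓ, U ℓ) = {x})
    {ε : ℝ} (hε : 0 < ε) :
    ∃ J, ∀ j, J ≤ j → ∀ y z : X, sameBlock Φ (U j) y z → dist y z < ε := by
  obtain ⟨δ, δpos, hδ⟩ := heqc ε hε
  obtain ⟨J, hJ⟩ := shrink hadapt hanti hinter (half_pos δpos)
  refine ⟨J, fun j hj y z hyz => ?_⟩
  obtain ⟨k, hky, hkz⟩ := hyz
  have h1 : dist (Φ k y) (Φ k z) < δ := by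
    calc dist (Φ k y) (Φ k z) ≤ dist (Φ k y) x + dist (Φ k z) x := dist_triangle_right _ _ _
    _ < δ / 2 + δ / 2 := add_lt_add (hJ j hj _ hky) (hJ j hj _ hkz)
    _ = δ := add_halves δ
  have h2 := hδ _ _ h1 k⁻¹
  rwa [← phi_mul_apply, ← phi_mul_apply, inv_mul_cancel, phi_one_apply, phi_one_apply] at h2

/-- The main construction: every level-`L` permutation coming from the stabilizer is
realized by an element of the discriminant group, assuming the chain is in normal form. -/
theorem exists_discElt
    (hmin : IsMinimalAction Φ) (heqc : IsEquicontinuousAction Φ)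
    (hadapt : ∀ ℓ, IsAdaptedSet Φ (U ℓ)) (hx : ∀ ℓ, x ∈ U ℓ)
    (hanti : Antitone U) (hinter : (⋂ ℓ, U ℓ) = {x})
    (hle : ∀ ℓ, adaptedStabilizer Φ (U (ℓ + 1)) ≤ adaptedStabilizer Φ (U ℓ))
    (L : ℕ)
    (hnf : (chainDinf (fun j => adaptedStabilizer Φ (U j)) hle).map
        (Pi.evalMonoidHom (chainQuot fun j => adaptedStabilizer Φ (U j)) L) = ⊤)
    {g : Γ} (hg : g ∈ adaptedStabilizer Φ (U L)) :
    ∃ d : ↥(profiniteClosure Φ), d ∈ discriminant Φ x ∧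
      blockHom Φ (U L) hmin (hadapt L) d = tauHom Φ (U L) hmin (hadapt L) g := by
  classical
  set Γs : ℕ → Subgroup Γ := fun j => adaptedStabilizer Φ (U j) with hGs
  have hmem : (QuotientGroup.mk (⟨g, hg⟩ : ↥(Γs L)) : chainQuot Γs L) ∈
      Subgroup.map (Pi.evalMonoidHom (chainQuot Γs) L) (chainDinf Γs hle) := by
    rw [hnf]; exact Subgroup.mem_top _
  replace hmem := Subgroup.mem_map.1 hmem
  obtain ⟨z, hz, hzL⟩ := hmem
  have hzc : ∀ j, chainBond Γs hle j (z (j + 1)) = z j := hz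
  choose w hw using fun j => QuotientGroup.mk_surjective (z j)
  set gj : ℕ → Γ := fun j => ((w j : ↥(Γs j)) : Γ) with hgjdef
  have hgjmem : ∀ j, gj j ∈ Γs j := fun j => (w j).2
  have hSanti : ∀ {j k : ℕ}, j ≤ k → Γs k ≤ Γs j := by
    intro j k h
    induction k, h using Nat.le_induction with
    | base => exact le_rfl
    | succ k hk ih => exact (hle k).trans ih
  have hCanti : ∀ {j k : ℕ}, j ≤ k → (Γs k).normalCore ≤ (Γs j).normalCore :=
    fun h => Subgroup.normalCore_mono (hSanti h)
  have hcomp : ∀ j, (gj j)⁻¹ * gj (j + 1) ∈ (Γs j).normalCore := by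
    intro j
    have h1 : chainBond Γs hle j (QuotientGroup.mk (w (j + 1))) = QuotientGroup.mk (w j) := by
      rw [hw, hw]; exact hzc j
    have h2 : (QuotientGroup.mk (Subgroup.inclusion (hle j) (w (j + 1))) :
        ↥(Γs j) ⧸ ((Γs j).normalCore.subgroupOf (Γs j))) = QuotientGroup.mk (w j) := h1
    rw [eq_comm, QuotientGroup.eq, Subgroup.mem_subgroupOf] at h2
    simpa using h2
  have htele : ∀ j k, j ≤ k → (gj j)⁻¹ * gj k ∈ (Γs j).normalCore := by
    intro j k hjk
    induction k, hjk using Nat.le_induction with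
    | base => simpa using Subgroup.one_mem _
    | succ k hk ih =>
      have h2 := hCanti hk (hcomp k)
      have h3 := Subgroup.mul_mem _ ih h2
      simpa [mul_assoc] using h3
  set F : ℕ → C(X, X) := fun j => ⟨⇑(Φ (gj j)), (Φ (gj j)).continuous⟩ with hFdef
  set Finv : ℕ → C(X, X) := fun j => ⟨⇑(Φ ((gj j)⁻¹)), (Φ ((gj j)⁻¹)).continuous⟩ with hFinvdef
  have hkey : ∀ ε : ℝ, 0 < ε → ∃ N, ∀ m n, N ≤ m → m ≤ n →
      (∀ y, dist (Φ (gj n) y) (Φ (gj m) y) < ε) ∧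
      (∀ y, dist (Φ ((gj n)⁻¹) y) (Φ ((gj m)⁻¹) y) < ε) := by
    intro ε hε
    obtain ⟨δ, δpos, hδ⟩ := heqc ε hε
    have hetapos : 0 < min δ ε := lt_min δpos hε
    obtain ⟨J, hJ⟩ := blocks_small hmin heqc hadapt hanti hinter hetapos
    refine ⟨J, fun m n hJm hmn => ?_⟩
    have hc : (gj m)⁻¹ * gj n ∈ (Γs m).normalCore := htele m n hmn
    constructor
    · intro y
      have hb : sameBlock Φ (U m) (Φ ((gj m)⁻¹ * gj n) y) y :=
        core_sameBlock Φ (U m) hmin (hadapt m) hc y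
      have hd : dist (Φ ((gj m)⁻¹ * gj n) y) y < min δ ε := hJ m hJm _ _ hb
      have hd2 := hδ _ _ (hd.trans_le (min_le_left _ _)) (gj m)
      rw [← phi_mul_apply, mul_inv_cancel_left] at hd2
      exact hd2
    · intro y
      have hb : sameBlock Φ (U m)
          (Φ (((gj m)⁻¹ * gj n)⁻¹) (Φ ((gj m)⁻¹) y)) (Φ ((gj m)⁻¹) y) :=
        core_sameBlock Φ (U m) hmin (hadapt m) (Subgroup.inv_mem _ hc) _
      have hd : dist (Φ (((gj m)⁻¹ * gj n)⁻¹) (Φ ((gj m)⁻¹) y)) (Φ ((gj m)⁻¹) y) < min δ ε :=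
        hJ m hJm _ _ hb
      have hrw : Φ (((gj m)⁻¹ * gj n)⁻¹) (Φ ((gj m)⁻¹) y) = Φ ((gj n)⁻¹) y := by
        rw [← phi_mul_apply]
        congr 1
        group
      rw [hrw] at hd
      exact hd.trans_le (min_le_right _ _)
  have hcF : CauchySeq F := by
    rw [Metric.cauchySeq_iff']
    intro ε hε
    obtain ⟨N, hN⟩ := hkey (ε / 2) (half_pos hε)
    refine ⟨N, fun n hn => ?_⟩
    have hd : dist (F n) (F N) ≤ ε / 2 :=
      (ContinuousMap.dist_le (half_pos hε).le).2 fun y => ((hN N n le_rfl hn).1 y).le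
    exact lt_of_le_of_lt hd (half_lt_self hε)
  have hcFinv : CauchySeq Finv := by
    rw [Metric.cauchySeq_iff']
    intro ε hε
    obtain ⟨N, hN⟩ := hkey (ε / 2) (half_pos hε)
    refine ⟨N, fun n hn => ?_⟩
    have hd : dist (Finv n) (Finv N) ≤ ε / 2 :=
      (ContinuousMap.dist_le (half_pos hε).le).2 fun y => ((hN N n le_rfl hn).2 y).le
    exact lt_of_le_of_lt hd (half_lt_self hε)
  obtain ⟨f, hf⟩ := cauchySeq_tendsto_of_complete hcF
  obtain ⟨finv, hfinv⟩ := cauchySeq_tendsto_of_complete hcFinv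
  have hfm := Metric.tendsto_atTop.1 hf
  have hfim := Metric.tendsto_atTop.1 hfinv
  have hre : ∀ y, f (finv y) = y := by
    intro y
    apply eq_of_forall_dist_le
    intro ε hε
    obtain ⟨δ, δpos, hδ⟩ := heqc (ε / 3) (by positivity)
    obtain ⟨N1, hN1⟩ := hfm (ε / 3) (by positivity)
    obtain ⟨N2, hN2⟩ := hfim (min δ (ε / 3)) (lt_min δpos (by positivity))
    set n := max N1 N2 with hn
    have h1 : dist (f (finv y)) (Φ (gj n) (finv y)) < ε / 3 := by
      refine lt_of_le_of_lt ?_ (hN1 n (le_max_left _ _))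
      rw [dist_comm]
      exact ContinuousMap.dist_apply_le_dist (f := F n) (g := f) (finv y)
    have h2 : dist (Φ (gj n) (finv y)) (Φ (gj n) (Φ ((gj n)⁻¹) y)) < ε / 3 := by
      apply hδ
      refine lt_of_le_of_lt ?_ ((hN2 n (le_max_right _ _)).trans_le (min_le_left _ _))
      rw [dist_comm]
      exact ContinuousMap.dist_apply_le_dist (f := Finv n) (g := finv) y
    have h3 : Φ (gj n) (Φ ((gj n)⁻¹) y) = y := by
      rw [← phi_mul_apply, mul_inv_cancel, phi_one_apply]
    calc dist (f (finv y)) y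
        ≤ dist (f (finv y)) (Φ (gj n) (finv y)) + dist (Φ (gj n) (finv y)) y :=
          dist_triangle _ _ _
      _ = dist (f (finv y)) (Φ (gj n) (finv y)) +
          dist (Φ (gj n) (finv y)) (Φ (gj n) (Φ ((gj n)⁻¹) y)) := by rw [h3]
      _ ≤ ε / 3 + ε / 3 := add_le_add h1.le h2.le
      _ ≤ ε := by linarith
  have hre2 : ∀ y, finv (f y) = y := by
    intro y
    apply eq_of_forall_dist_le
    intro ε hε
    obtain ⟨δ, δpos, hδ⟩ := heqc (ε / 3) (by positivity)
    obtain ⟨N2, hN2⟩ := hfim (ε / 3) (by positivity)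
    obtain ⟨N1, hN1⟩ := hfm (min δ (ε / 3)) (lt_min δpos (by positivity))
    set n := max N1 N2 with hn
    have h1 : dist (finv (f y)) (Φ ((gj n)⁻¹) (f y)) < ε / 3 := by
      refine lt_of_le_of_lt ?_ (hN2 n (le_max_right _ _))
      rw [dist_comm]
      exact ContinuousMap.dist_apply_le_dist (f := Finv n) (g := finv) (f y)
    have h2 : dist (Φ ((gj n)⁻¹) (f y)) (Φ ((gj n)⁻¹) (Φ (gj n) y)) < ε / 3 := by
      apply hδ
      refine lt_of_le_of_lt ?_ ((hN1 n (le_max_left _ _)).trans_le (min_le_left _ _))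
      rw [dist_comm]
      exact ContinuousMap.dist_apply_le_dist (f := F n) (g := f) y
    have h3 : Φ ((gj n)⁻¹) (Φ (gj n) y) = y := by
      rw [← phi_mul_apply, inv_mul_cancel, phi_one_apply]
    calc dist (finv (f y)) y
        ≤ dist (finv (f y)) (Φ ((gj n)⁻¹) (f y)) + dist (Φ ((gj n)⁻¹) (f y)) y :=
          dist_triangle _ _ _
      _ = dist (finv (f y)) (Φ ((gj n)⁻¹) (f y)) +
          dist (Φ ((gj n)⁻¹) (f y)) (Φ ((gj n)⁻¹) (Φ (gj n) y)) := by rw [h3]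
      _ ≤ ε / 3 + ε / 3 := add_le_add h1.le h2.le
      _ ≤ ε := by linarith
  set d0 : X ≃ₜ X :=
    { toEquiv := ⟨⇑f, ⇑finv, hre2, hre⟩
      continuous_toFun := f.continuous
      continuous_invFun := finv.continuous } with hd0def
  have hd0dist : ∀ n : ℕ, dist d0 (Φ (gj n)) = dist f (F n) := by
    intro n
    rw [Homeomorph.dist_eq_contMap]
    congr 1 <;> ext y <;> rfl
  have hd0mem : d0 ∈ profiniteClosure Φ := by
    have hcl : d0 ∈ closure (Φ.range : Set (X ≃ₜ X)) := by
      rw [Metric.mem_closure_iff]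
      intro ε hε
      obtain ⟨N1, hN1⟩ := hfm ε hε
      refine ⟨Φ (gj N1), ⟨gj N1, rfl⟩, ?_⟩
      rw [hd0dist, dist_comm]
      exact hN1 N1 le_rfl
    exact hcl
  have hd0x : (d0 : X ≃ₜ X) x = x := by
    have hpt : Filter.Tendsto (fun n => (F n) x) Filter.atTop (nhds (f x)) := by
      have hcont : Continuous fun q : C(X, X) => q x :=
        ContinuousEvalConst.continuous_eval_const x
      exact (hcont.tendsto f).comp hf
    have hmemU : f x ∈ ⋂ m, U m := by
      refine Set.mem_iInter.2 fun m => ?_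
      refine ((hadapt m).2.1.1).mem_of_tendsto hpt ?_
      refine Filter.eventually_atTop.2 ⟨m, fun n hn => ?_⟩
      have h1 : Φ (gj n) x ∈ U n := by
        have himg : Φ (gj n) '' U n = U n := hgjmem n
        rw [← himg]
        exact Set.mem_image_of_mem _ (hx n)
      exact hanti hn h1
    rw [hinter] at hmemU
    exact Set.mem_singleton_iff.1 hmemU
  obtain ⟨dL, dLpos, hdL⟩ := exists_sep Φ (U L) hmin (hadapt L)
  obtain ⟨N1, hN1⟩ := hfm dL dLpos
  set n := max N1 L with hndef
  have hclose : dist ((⟨d0, hd0mem⟩ : ↥(profiniteClosure Φ)) : X ≃ₜ X)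
      ((iota Φ (gj n) : ↥(profiniteClosure Φ)) : X ≃ₜ X) < dL := by
    rw [iota_coe]
    show dist d0 (Φ (gj n)) < dL
    rw [hd0dist, dist_comm]
    exact hN1 n (le_max_left _ _)
  have hperm1 : blockHom Φ (U L) hmin (hadapt L) ⟨d0, hd0mem⟩ =
      tauHom Φ (U L) hmin (hadapt L) (gj n) :=
    blockHom_eq_of_close Φ (U L) hmin (hadapt L) hdL hclose
  have hgL : (gj L)⁻¹ * g ∈ (Γs L).normalCore := by
    have h1 : (QuotientGroup.mk (w L) : chainQuot Γs L) =
        QuotientGroup.mk (⟨g, hg⟩ : ↥(Γs L)) := by rw [hw]; exact hzL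
    rw [QuotientGroup.eq, Subgroup.mem_subgroupOf] at h1
    simpa using h1
  have hgn : g⁻¹ * gj n ∈ (Γs L).normalCore := by
    have h2 := htele L n (le_max_right _ _)
    have h3 := Subgroup.mul_mem _ (Subgroup.inv_mem _ hgL) h2
    simpa [mul_assoc] using h3
  have htau : tauHom Φ (U L) hmin (hadapt L) g = tauHom Φ (U L) hmin (hadapt L) (gj n) := by
    have h4 := tauHom_eq_one_of_core Φ (U L) hmin (hadapt L) hgn
    rw [map_mul, map_inv] at h4
    exact inv_mul_eq_one.1 h4
  exact ⟨⟨d0, hd0mem⟩, hd0x, hperm1.trans htau.symm⟩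

end SODisc

namespace SODisc

set_option linter.unusedSectionVars false
set_option maxHeartbeats 1000000

open Metric Set

variable {X : Type*} [MetricSpace X] [CompactSpace X]
variable {Γ : Type*} [Group Γ] {Φ : Γ →* (X ≃ₜ X)}
variable {x : X} {U : ℕ → Set X}

theorem ker_tau_comp (V : Set X) (hmin : IsMinimalAction Φ) (hV : IsAdaptedSet Φ V) :
    ((tauHom Φ V hmin hV).comp (adaptedStabilizer Φ V).subtype).ker =
      ((adaptedStabilizer Φ V).normalCore).subgroupOf (adaptedStabilizer Φ V) := by
  ext gS
  rw [MonoidHom.mem_ker, Subgroup.mem_subgroupOf]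
  constructor
  · intro h
    exact core_of_tauHom_eq_one Φ V hmin hV h
  · intro h
    exact tauHom_eq_one_of_core Φ V hmin hV h

theorem idx_eq_card_range (V : Set X) (hmin : IsMinimalAction Φ) (hV : IsAdaptedSet Φ V) :
    (((adaptedStabilizer Φ V).normalCore).subgroupOf (adaptedStabilizer Φ V)).index =
      Nat.card (((tauHom Φ V hmin hV).comp (adaptedStabilizer Φ V).subtype).range) := by
  rw [Subgroup.index_eq_card, ← ker_tau_comp V hmin hV]
  exact Nat.card_congr (QuotientGroup.quotientKerEquivRange _).toEquiv

theorem idx_ne_zero (V : Set X) (hmin : IsMinimalAction Φ) (hV : IsAdaptedSet Φ V) :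
    (((adaptedStabilizer Φ V).normalCore).subgroupOf (adaptedStabilizer Φ V)).index ≠ 0 := by
  rw [idx_eq_card_range V hmin hV]
  haveI hfin : Finite (Equiv.Perm (Blocks Φ V hmin hV)) := finite_perm_blocks Φ V hmin hV
  haveI : Finite (((tauHom Φ V hmin hV).comp (adaptedStabilizer Φ V).subtype).range) :=
    Subtype.finite
  haveI : Nonempty (((tauHom Φ V hmin hV).comp (adaptedStabilizer Φ V).subtype).range) := ⟨1⟩
  exact Nat.card_pos.ne'

theorem map_blockHom_disc_eq
    (hmin : IsMinimalAction Φ) (heqc : IsEquicontinuousAction Φ)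
    (hadapt : ∀ ℓ, IsAdaptedSet Φ (U ℓ)) (hx : ∀ ℓ, x ∈ U ℓ)
    (hanti : Antitone U) (hinter : (⋂ ℓ, U ℓ) = {x})
    (hle : ∀ ℓ, adaptedStabilizer Φ (U (ℓ + 1)) ≤ adaptedStabilizer Φ (U ℓ))
    (L : ℕ)
    (hnf : (chainDinf (fun j => adaptedStabilizer Φ (U j)) hle).map
        (Pi.evalMonoidHom (chainQuot fun j => adaptedStabilizer Φ (U j)) L) = ⊤) :
    Subgroup.map (blockHom Φ (U L) hmin (hadapt L)) (discriminant Φ x) =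
      Subgroup.map (tauHom Φ (U L) hmin (hadapt L)) (adaptedStabilizer Φ (U L)) := by
  apply le_antisymm
  · rintro π hπ
    rw [Subgroup.mem_map] at hπ ⊢
    obtain ⟨d, hdD, rfl⟩ := hπ
    obtain ⟨δ, δpos, hδ⟩ := exists_sep Φ (U L) hmin (hadapt L)
    obtain ⟨g, hgd⟩ := exists_close (Φ := Φ) d.2 δpos
    have heq : blockHom Φ (U L) hmin (hadapt L) d = tauHom Φ (U L) hmin (hadapt L) g :=
      blockHom_eq_of_close Φ (U L) hmin (hadapt L) hδ (by rw [iota_coe]; exact hgd)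
    have hxblock : sameBlock Φ (U L) x (Φ g x) := by
      have h2 := congrArg (fun e : Equiv.Perm (Blocks Φ (U L) hmin (hadapt L)) =>
        e (toBlock Φ (U L) hmin (hadapt L) x)) heq
      have hdx : (d : X ≃ₜ X) x = x := hdD
      rw [blockHom_apply_mk, tauHom_apply_mk, hdx] at h2
      exact (toBlock_eq_iff Φ (U L) hmin (hadapt L)).1 h2
    obtain ⟨k, hk1, hk2⟩ := hxblock
    have hkS : k ∈ adaptedStabilizer Φ (U L) := adapted_mem_stab (hadapt L) (hx L) hk1
    have hkgS : k * g ∈ adaptedStabilizer Φ (U L) := by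
      apply adapted_mem_stab (hadapt L) (hx L)
      rw [phi_mul_apply]; exact hk2
    have hgS : g ∈ adaptedStabilizer Φ (U L) := by
      have h3 := Subgroup.mul_mem _ (Subgroup.inv_mem _ hkS) hkgS
      simpa using h3
    exact ⟨g, hgS, heq.symm⟩
  · rintro π hπ
    rw [Subgroup.mem_map] at hπ ⊢
    obtain ⟨g, hgS, rfl⟩ := hπ
    obtain ⟨d, hdD, hdperm⟩ :=
      exists_discElt hmin heqc hadapt hx hanti hinter hle L hnf hgS
    exact ⟨d, hdD, hdperm⟩

theorem card_eq
    (hmin : IsMinimalAction Φ) (heqc : IsEquicontinuousAction Φ)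
    (hadapt : ∀ ℓ, IsAdaptedSet Φ (U ℓ)) (hx : ∀ ℓ, x ∈ U ℓ)
    (hanti : Antitone U) (hinter : (⋂ ℓ, U ℓ) = {x})
    (hle : ∀ ℓ, adaptedStabilizer Φ (U (ℓ + 1)) ≤ adaptedStabilizer Φ (U ℓ))
    (L : ℕ)
    (hnf : (chainDinf (fun j => adaptedStabilizer Φ (U j)) hle).map
        (Pi.evalMonoidHom (chainQuot fun j => adaptedStabilizer Φ (U j)) L) = ⊤) :
    Nat.card (↥(discriminant Φ x) ⧸
        ((blockHom Φ (U L) hmin (hadapt L)).ker.subgroupOf (discriminant Φ x))) =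
      (((adaptedStabilizer Φ (U L)).normalCore).subgroupOf (adaptedStabilizer Φ (U L))).index := by
  have hkerD : ((blockHom Φ (U L) hmin (hadapt L)).comp (discriminant Φ x).subtype).ker =
      (blockHom Φ (U L) hmin (hadapt L)).ker.subgroupOf (discriminant Φ x) := rfl
  have e1 : Nat.card (↥(discriminant Φ x) ⧸
      ((blockHom Φ (U L) hmin (hadapt L)).ker.subgroupOf (discriminant Φ x))) =
      Nat.card (((blockHom Φ (U L) hmin (hadapt L)).comp (discriminant Φ x).subtype).range) := by
    rw [← hkerD]
    exact Nat.card_congr (QuotientGroup.quotientKerEquivRange _).toEquiv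
  have e2 : ((blockHom Φ (U L) hmin (hadapt L)).comp (discriminant Φ x).subtype).range =
      Subgroup.map (blockHom Φ (U L) hmin (hadapt L)) (discriminant Φ x) := by
    rw [MonoidHom.range_comp, Subgroup.range_subtype]
  have e3 := map_blockHom_disc_eq hmin heqc hadapt hx hanti hinter hle L hnf
  have e4 : Subgroup.map (tauHom Φ (U L) hmin (hadapt L)) (adaptedStabilizer Φ (U L)) =
      ((tauHom Φ (U L) hmin (hadapt L)).comp (adaptedStabilizer Φ (U L)).subtype).range := by
    rw [MonoidHom.range_comp, Subgroup.range_subtype]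
  rw [e1, e2, e3, e4, idx_eq_card_range (U L) hmin (hadapt L)]

theorem ker_small
    (hmin : IsMinimalAction Φ) (heqc : IsEquicontinuousAction Φ)
    (hadapt : ∀ ℓ, IsAdaptedSet Φ (U ℓ)) (hanti : Antitone U) (hinter : (⋂ ℓ, U ℓ) = {x})
    {ε : ℝ} (hε : 0 < ε) :
    ∃ L, ∀ d : ↥(profiniteClosure Φ),
      d ∈ (blockHom Φ (U L) hmin (hadapt L)).ker → dist d 1 < ε := by
  obtain ⟨J, hJ⟩ := blocks_small hmin heqc hadapt hanti hinter (half_pos hε)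
  refine ⟨J, fun d hd => ?_⟩
  rw [Subtype.dist_eq]
  have h1 : ∀ y, sameBlock Φ (U J) ((d : X ≃ₜ X) y) y :=
    (mem_ker_blockHom Φ (U J) hmin (hadapt J)).1 hd
  have h2 : dist (d : X ≃ₜ X) (((1 : ↥(profiniteClosure Φ)) : X ≃ₜ X)) ≤ ε / 2 := by
    have hone : (((1 : ↥(profiniteClosure Φ)) : X ≃ₜ X)) = 1 := rfl
    rw [hone]
    apply dist_le_of_forall (half_pos hε).le
    intro y
    have h3 := hJ J le_rfl _ _ (h1 y)
    simpa using h3.le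
  exact lt_of_le_of_lt h2 (half_lt_self hε)

end SODisc

/-- If the group chain of stabilizers of an adapted neighborhood basis
at `x` is in normal form (all projections from the inverse limit `D_∞ = lim← Γ_ℓ/C_ℓ` are
surjective), then `Π[D(Φ,x)] = LCM{[Γ_ℓ : C_ℓ]}`. -/
theorem steinitzOrderDisc_eq_of_normalForm_groupChain
    {X : Type*} [MetricSpace X] [CompactSpace X] [Nonempty X] [TotallyDisconnectedSpace X]
    (hperf : Perfect (Set.univ : Set X))
    {Γ : Type*} [Group Γ] [Countable Γ] (Φ : Γ →* (X ≃ₜ X))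
    (hmin : IsMinimalAction Φ) (heqc : IsEquicontinuousAction Φ)
    (x : X) (U : ℕ → Set X)
    (hadapt : ∀ ℓ, IsAdaptedSet Φ (U ℓ)) (hx : ∀ ℓ, x ∈ U ℓ)
    (hproper : ∀ ℓ, U (ℓ + 1) ⊂ U ℓ) (hinter : (⋂ ℓ, U ℓ) = {x})
    (hnormalform : ∀ ℓ,
      (chainDinf (fun j => adaptedStabilizer Φ (U j))
          (fun j => adaptedStabilizer_mono Φ (hproper j).subset
            (hadapt j) (hadapt (j + 1)))).map
        (Pi.evalMonoidHom (chainQuot fun j => adaptedStabilizer Φ (U j)) ℓ) = ⊤) :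
    steinitzOrderDisc Φ x =
      SteinitzNum.lcmSet (Set.range fun ℓ =>
        (((adaptedStabilizer Φ (U ℓ)).normalCore).subgroupOf
            (adaptedStabilizer Φ (U ℓ))).index) := by
  classical
  have hUanti : Antitone U := antitone_nat_of_succ_le fun n => (hproper n).subset
  have hle : ∀ ℓ, adaptedStabilizer Φ (U (ℓ + 1)) ≤ adaptedStabilizer Φ (U ℓ) :=
    fun j => adaptedStabilizer_mono Φ (hproper j).subset (hadapt j) (hadapt (j + 1))
  funext p
  unfold steinitzOrderDisc steinitzOrderOfSubgroup SteinitzNum.lcmSet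
  apply le_antisymm
  · refine iSup₂_le fun n hn => ?_
    obtain ⟨N', hNnorm, hNopen, rfl⟩ := hn
    have h1 : (1 : ↥(profiniteClosure Φ)) ∈ N' := N'.one_mem
    obtain ⟨ε, εpos, hball⟩ := Metric.isOpen_iff.1 hNopen 1 h1
    obtain ⟨L, hL⟩ := SODisc.ker_small hmin heqc hadapt hUanti hinter εpos
    have hsub : (SODisc.blockHom Φ (U L) hmin (hadapt L)).ker ≤ N' := by
      intro d hd
      have hdm : d ∈ Metric.ball (1 : ↥(profiniteClosure Φ)) ε := by
        rw [Metric.mem_ball]; exact hL d hd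
      exact hball hdm
    have hdvd : Nat.card (↥(discriminant Φ x) ⧸ N'.subgroupOf (discriminant Φ x)) ∣
        (((adaptedStabilizer Φ (U L)).normalCore).subgroupOf
          (adaptedStabilizer Φ (U L))).index := by
      rw [← SODisc.card_eq hmin heqc hadapt hx hUanti hinter hle L (hnormalform L),
        ← Subgroup.index_eq_card, ← Subgroup.index_eq_card]
      exact Subgroup.index_dvd_of_le (Subgroup.comap_mono hsub)
    have hm0 : (((adaptedStabilizer Φ (U L)).normalCore).subgroupOf
        (adaptedStabilizer Φ (U L))).index ≠ 0 :=
      SODisc.idx_ne_zero (U L) hmin (hadapt L)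
    have hn0 : Nat.card (↥(discriminant Φ x) ⧸ N'.subgroupOf (discriminant Φ x)) ≠ 0 := by
      intro h0
      rw [h0, zero_dvd_iff] at hdvd
      exact hm0 hdvd
    refine le_iSup₂_of_le (((adaptedStabilizer Φ (U L)).normalCore).subgroupOf
        (adaptedStabilizer Φ (U L))).index ⟨L, rfl⟩ ?_
    exact_mod_cast Nat.cast_le.2 ((Nat.factorization_le_iff_dvd hn0 hm0).2 hdvd (p : ℕ))
  · refine iSup₂_le fun n hn => ?_
    obtain ⟨L, rfl⟩ := hn
    refine le_iSup₂_of_le (((adaptedStabilizer Φ (U L)).normalCore).subgroupOf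
        (adaptedStabilizer Φ (U L))).index
      ⟨(SODisc.blockHom Φ (U L) hmin (hadapt L)).ker, inferInstance,
        SODisc.isOpen_ker_blockHom Φ (U L) hmin (hadapt L),
        (SODisc.card_eq hmin heqc hadapt hx hUanti hinter hle L (hnormalform L)).symm⟩
      le_rfl
end
end
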